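/- arXiv:1002.1356 — 12 statements merged into one kernel-verified Lean document; each statement's English description precedes it below -/
import Mathlib

section
/- If C(z) is an odd rational function with real coefficients such that Re C(z) > 0 whenever Re z > 0, then every complex solution z of the equation C(z) = 1 satisfies Re z > 0. -/
open Polynomial

/-- If `C(z)` is an odd rational function with real coefficients such that
`Re C(z) > 0` whenever `Re z > 0`, then every complex solution of `C(z) = 1`
satisfies `Re z > 0`. -/
theorem stmt_0 (p q : Polynomial ℝ) (hq : q ≠ 0) (C : ℂ → ℂ)
    (hC : ∀ z : ℂ, aeval z q ≠ 0 → C z = aeval z p / aeval z q)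
    (hodd : ∀ z : ℂ, aeval z q ≠ 0 → aeval (-z) q ≠ 0 → C (-z) = - C z)
    (hpos : ∀ z : ℂ, 0 < z.re → aeval z q ≠ 0 → 0 < (C z).re) :
    ∀ z : ℂ, aeval z q ≠ 0 → C z = 1 → 0 < z.re := by
  intro z hz hz1
  set P : ℂ[X] := p.map (algebraMap ℝ ℂ) with hPdef
  set Q : ℂ[X] := q.map (algebraMap ℝ ℂ) with hQdef
  have haP : ∀ w : ℂ, aeval w p = P.eval w := fun w => by rw [aeval_def, eval_map]
  have haQ : ∀ w : ℂ, aeval w q = Q.eval w := fun w => by rw [aeval_def, eval_map]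
  have hQne : Q ≠ 0 := (Polynomial.map_ne_zero_iff (algebraMap ℝ ℂ).injective).mpr hq
  -- the key polynomial identity expressing oddness of P/Q
  have hA : P.comp (-X) * Q + P * Q.comp (-X) = 0 := by
    apply Polynomial.eq_zero_of_infinite_isRoot
    have hfin : ({x : ℂ | Q.IsRoot x} ∪ (fun x : ℂ => -x) ⁻¹' {x : ℂ | Q.IsRoot x}).Finite :=
      (Polynomial.finite_setOf_isRoot hQne).union
        ((Polynomial.finite_setOf_isRoot hQne).preimage (neg_injective.injOn))
    apply Set.Infinite.mono _ (hfin.infinite_compl)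
    intro w hw
    simp only [Set.mem_compl_iff, Set.mem_union, Set.mem_preimage, Set.mem_setOf_eq,
      not_or] at hw
    obtain ⟨hw1, hw2⟩ := hw
    have hq1 : aeval w q ≠ 0 := by rw [haQ]; exact hw1
    have hq2 : aeval (-w) q ≠ 0 := by rw [haQ]; exact hw2
    have e1 := hC w hq1
    have e2 := hC (-w) hq2
    have e3 := hodd w hq1 hq2
    rw [e1, e2, haP, haP, haQ, haQ] at e3
    have hne1 : Q.eval w ≠ 0 := hw1
    have hne2 : Q.eval (-w) ≠ 0 := hw2
    have : P.eval (-w) * Q.eval w = -(P.eval w * Q.eval (-w)) := by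
      field_simp at e3
      linear_combination e3
    simp only [Set.mem_setOf_eq, IsRoot.def, eval_add, eval_mul, eval_comp, eval_neg, eval_X]
    linear_combination this
  -- gcd reduction
  set g : ℂ[X] := GCDMonoid.gcd P Q with hgdef
  have hgne : g ≠ 0 := gcd_ne_zero_of_right hQne
  set P1 : ℂ[X] := P / g with hP1def
  set Q1 : ℂ[X] := Q / g with hQ1def
  have hPfac : g * P1 = P :=
    EuclideanDomain.mul_div_cancel' hgne (GCDMonoid.gcd_dvd_left _ _)
  have hQfac : g * Q1 = Q :=
    EuclideanDomain.mul_div_cancel' hgne (GCDMonoid.gcd_dvd_right _ _)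
  have hcop : IsCoprime P1 Q1 := isCoprime_div_gcd_div_gcd hQne
  -- descend the identity to P1, Q1
  have hgneg : g.comp (-X) ≠ 0 := by
    intro h
    apply hgne
    have := congrArg (fun r => r.comp (-(X : ℂ[X]))) h
    simpa [comp_assoc] using this
  have hB : P1.comp (-X) * Q1 + P1 * Q1.comp (-X) = 0 := by
    have expand : (g.comp (-X) * g) * (P1.comp (-X) * Q1 + P1 * Q1.comp (-X)) = 0 := by
      rw [← hPfac, ← hQfac] at hA
      simp only [mul_comp] at hA
      linear_combination hA
    rcases mul_eq_zero.mp expand with h | h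
    · exact absurd h (mul_ne_zero hgneg hgne)
    · exact h
  -- evaluations at z
  have hQz : Q.eval z ≠ 0 := by rw [← haQ]; exact hz
  have hgz : g.eval z ≠ 0 := fun h => hQz (by rw [← hQfac, eval_mul, h, zero_mul])
  have hQ1z : Q1.eval z ≠ 0 := fun h => hQz (by rw [← hQfac, eval_mul, h, mul_zero])
  have hPQz : P.eval z = Q.eval z := by
    have := hC z hz
    rw [hz1, haP, haQ] at this
    field_simp at this
    linear_combination -this
  have hP1Q1z : P1.eval z = Q1.eval z := by
    have h1 : g.eval z * P1.eval z = g.eval z * Q1.eval z := by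
      rw [← eval_mul, ← eval_mul, hPfac, hQfac, hPQz]
    exact mul_left_cancel₀ hgz h1
  -- case split on the sign of z.re
  rcases lt_trichotomy 0 z.re with h | h | h
  · exact h
  · -- z purely imaginary: contradiction via conjugation
    exfalso
    have hconj : -z = (starRingEnd ℂ) z := by
      apply Complex.ext <;> simp [← h]
    have hqc : aeval (-z) q ≠ 0 := by
      rw [hconj, Polynomial.aeval_conj]
      simpa using hz
    have e1 := hodd z hz hqc
    rw [hz1] at e1
    have e2 : C (-z) = 1 := by
      rw [hC (-z) hqc, hconj, Polynomial.aeval_conj, Polynomial.aeval_conj,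
        ← map_div₀, ← hC z hz, hz1, map_one]
    rw [e2] at e1
    norm_num at e1
  · -- Re z < 0 : contradiction
    exfalso
    set w : ℂ := -z with hwdef
    have hwre : 0 < w.re := by simp [hwdef]; linarith
    by_cases hQw : Q.eval w = 0
    · -- w is a common root of P and Q; use the reduced fraction P1/Q1
      -- evaluate the descended identity at z
      have hB' : P1.eval w * Q1.eval z + P1.eval z * Q1.eval w = 0 := by
        have := congrArg (fun r => r.eval z) hB
        simpa [eval_comp, ← hwdef] using this
      have hQ1w : Q1.eval w ≠ 0 := by
        intro h0
        have hP1w : P1.eval w = 0 := by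
          have h1 : P1.eval w * Q1.eval z = 0 := by
            rw [h0, mul_zero, add_zero] at hB'
            exact hB'
          exact (mul_eq_zero.mp h1).resolve_right hQ1z
        obtain ⟨a, b, hab⟩ := hcop
        have := congrArg (fun r => r.eval w) hab
        simp [hP1w, h0] at this
      have hfw : P1.eval w / Q1.eval w = -1 := by
        have : P1.eval w = -Q1.eval w := by
          have h1 : P1.eval w * Q1.eval z = -Q1.eval w * Q1.eval z := by
            rw [hP1Q1z] at hB'
            linear_combination hB'
          exact mul_right_cancel₀ hQ1z h1
        rw [this, neg_div, div_self hQ1w]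
      -- continuity argument: approach w from the right along reals
      have hcont : ContinuousAt (fun u : ℂ => (P1.eval u / Q1.eval u).re) w := by
        apply Complex.continuous_re.continuousAt.comp
        exact (P1.continuous_aeval.continuousAt).div (Q1.continuous_aeval.continuousAt) hQ1w
      have hpath : Filter.Tendsto (fun t : ℝ => w + (t : ℂ)) (nhdsWithin 0 (Set.Ioi 0)) (nhds w) := by
        apply Filter.Tendsto.mono_left _ nhdsWithin_le_nhds
        have : Filter.Tendsto (fun t : ℝ => w + (t : ℂ)) (nhds 0) (nhds (w + ((0:ℝ):ℂ))) := by
          exact (continuous_const.add (Complex.continuous_ofReal)).tendsto 0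
        simpa using this
      have htend : Filter.Tendsto (fun t : ℝ => (P1.eval (w + t) / Q1.eval (w + t)).re)
          (nhdsWithin 0 (Set.Ioi 0)) (nhds ((P1.eval w / Q1.eval w).re)) :=
        (hcont.tendsto.comp hpath)
      have hev : ∀ᶠ t : ℝ in nhdsWithin 0 (Set.Ioi 0),
          0 ≤ (P1.eval (w + t) / Q1.eval (w + t)).re := by
        -- the exceptional set of parameters where Q vanishes is finite
        have hTfin : {t : ℝ | Q.eval (w + (t:ℂ)) = 0}.Finite := by
          have hinj : Function.Injective (fun t : ℝ => w + (t : ℂ)) := by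
            intro a b hab
            exact_mod_cast add_left_cancel hab
          exact ((Polynomial.finite_setOf_isRoot hQne).preimage hinj.injOn)
        have hT'fin : ({t : ℝ | Q.eval (w + (t:ℂ)) = 0} \ {0}).Finite := hTfin.diff
        have hmem : ({t : ℝ | Q.eval (w + (t:ℂ)) = 0} \ {0})ᶜ ∈ nhds (0:ℝ) := by
          apply hT'fin.isClosed.isOpen_compl.mem_nhds
          simp
        have hev1 : ∀ᶠ t : ℝ in nhdsWithin 0 (Set.Ioi 0),
            t ∉ ({t : ℝ | Q.eval (w + (t:ℂ)) = 0} \ {0}) :=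
          Filter.eventually_iff_exists_mem.mpr ⟨_, nhdsWithin_le_nhds hmem, fun t ht => ht⟩
        have hev2 : ∀ᶠ t : ℝ in nhdsWithin 0 (Set.Ioi 0), t ∈ Set.Ioi (0:ℝ) :=
          self_mem_nhdsWithin
        filter_upwards [hev1, hev2] with t ht1 ht2
        have htpos : (0:ℝ) < t := ht2
        have hQwt : Q.eval (w + (t:ℂ)) ≠ 0 := by
          intro h0
          exact ht1 ⟨h0, ne_of_gt htpos⟩
        have haQwt : aeval (w + (t:ℂ)) q ≠ 0 := by rw [haQ]; exact hQwt
        have hrepos : 0 < (w + (t:ℂ)).re := by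
          simp only [Complex.add_re, Complex.ofReal_re]
          linarith
        have hCval := hpos (w + t) hrepos haQwt
        have hgwt : g.eval (w + (t:ℂ)) ≠ 0 :=
          fun h => hQwt (by rw [← hQfac, eval_mul, h, zero_mul])
        have heq : C (w + (t:ℂ)) = P1.eval (w + (t:ℂ)) / Q1.eval (w + (t:ℂ)) := by
          rw [hC _ haQwt, haP, haQ, ← hPfac, ← hQfac, eval_mul, eval_mul,
            mul_div_mul_left _ _ hgwt]
        rw [heq] at hCval
        exact le_of_lt hCval
      have : (0:ℝ) ≤ (P1.eval w / Q1.eval w).re := ge_of_tendsto htend hev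
      rw [hfw] at this
      norm_num at this
    · -- Q(w) ≠ 0 : direct contradiction from oddness and positivity
      have haQw : aeval w q ≠ 0 := by rw [haQ]; exact hQw
      have e1 := hodd z hz haQw
      rw [hz1] at e1
      have := hpos w hwre haQw
      rw [← hwdef] at e1
      rw [e1] at this
      norm_num at this
end

section
/- If C(z) is an odd rational function with real coefficients such that Re C(z) > 0 whenever Re z > 0, then every zero z₀ ∈ ℂ of C lies on the imaginary axis (Re z₀ = 0) and satisfies C'(z₀) > 0 (in particular C'(z₀) is a positive real number). -/
open Polynomial Filter Topology Complex Set

private lemma tendsto_ray (z₀ w : ℂ) :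
    Tendsto (fun ε : ℝ => z₀ + (ε : ℂ) * w) (𝓝[>] (0 : ℝ)) (𝓝 z₀) := by
  have h : Tendsto (fun ε : ℝ => z₀ + (ε : ℂ) * w) (𝓝 (0 : ℝ)) (𝓝 (z₀ + (0 : ℂ) * w)) :=
    tendsto_const_nhds.add ((Complex.continuous_ofReal.tendsto 0).mul tendsto_const_nhds)
  simpa using h.mono_left nhdsWithin_le_nhds

private lemma tendsto_ray' (z₀ : ℂ) {w : ℂ} (hw : w ≠ 0) :
    Tendsto (fun ε : ℝ => z₀ + (ε : ℂ) * w) (𝓝[>] (0 : ℝ)) (𝓝[≠] z₀) := by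
  rw [tendsto_nhdsWithin_iff]
  refine ⟨tendsto_ray z₀ w, ?_⟩
  filter_upwards [self_mem_nhdsWithin] with ε (hε : (0:ℝ) < ε)
  simp only [mem_compl_iff, mem_singleton_iff, add_eq_left]
  exact mul_ne_zero (by exact_mod_cast hε.ne') hw

private lemma key_limit {g : ℂ → ℂ} {z₀ w : ℂ} (hg : ContinuousAt g z₀)
    (h : ∀ᶠ ε : ℝ in 𝓝[>] (0 : ℝ), 0 ≤ (g (z₀ + (ε : ℂ) * w)).re) : 0 ≤ (g z₀).re := by
  have t : Tendsto (fun ε : ℝ => (g (z₀ + (ε : ℂ) * w)).re) (𝓝[>] (0 : ℝ)) (𝓝 (g z₀).re) :=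
    (Complex.continuous_re.continuousAt.tendsto.comp (hg.tendsto.comp (tendsto_ray z₀ w)))
  exact ge_of_tendsto t h

private lemma re_exp_mul (θ : ℝ) (z : ℂ) :
    (Complex.exp ((θ : ℂ) * I) * z).re = Real.cos θ * z.re - Real.sin θ * z.im := by
  rw [Complex.exp_mul_I]
  simp [Complex.add_re, Complex.mul_re, Complex.add_im, Complex.mul_im,
    Complex.cos_ofReal_re, Complex.sin_ofReal_re, Complex.cos_ofReal_im,
    Complex.sin_ofReal_im]
  try ring

/-- If `C(z) = p(z)/q(z)` is an odd nonzero rational function with real coefficients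
such that `Re C(z) > 0` whenever `Re z > 0`, then every zero `z₀` of `C` lies on the
imaginary axis and `C'(z₀)` is a positive real number. -/
theorem stmt_2 (p q : Polynomial ℝ) (hp : p ≠ 0) (hq : q ≠ 0) (C : ℂ → ℂ)
    (hC : ∀ z : ℂ, C z = aeval z p / aeval z q)
    (hodd : ∀ z : ℂ, aeval z q ≠ 0 → aeval (-z) q ≠ 0 → C (-z) = - C z)
    (hpos : ∀ z : ℂ, 0 < z.re → aeval z q ≠ 0 → 0 < (C z).re) :
    ∀ z : ℂ, aeval z q ≠ 0 → C z = 0 →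
      z.re = 0 ∧ 0 < (deriv C z).re ∧ (deriv C z).im = 0 := by
  intro z₀ hqz₀ hCz₀
  -- continuity of z ↦ aeval z q
  have hqcont : Continuous fun z : ℂ => aeval z q := by
    exact q.continuous_aeval
  -- analyticity of C at z₀
  have hFa : AnalyticAt ℂ C z₀ := by
    have h1 : AnalyticAt ℂ (fun z : ℂ => aeval z p) z₀ := by
      have := (analyticAt_id : AnalyticAt ℂ id z₀).aeval_polynomial p
      simpa using this
    have h2 : AnalyticAt ℂ (fun z : ℂ => aeval z q) z₀ := by
      have := (analyticAt_id : AnalyticAt ℂ id z₀).aeval_polynomial q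
      simpa using this
    exact (h1.div h2 hqz₀).congr (Filter.Eventually.of_forall fun z => (hC z).symm)
  -- eventually q ≠ 0 near z₀
  have hqev : ∀ᶠ z in 𝓝 z₀, aeval z q ≠ 0 :=
    (isOpen_compl_singleton.preimage hqcont).mem_nhds hqz₀
  -- eventually q(-z) ≠ 0 in the punctured neighborhood
  have hqodd : ∀ᶠ z in 𝓝[≠] z₀, aeval (-z) q ≠ 0 := by
    have hS : {x : ℂ | aeval x q = 0}.Finite := by
      have hmap : q.map (algebraMap ℝ ℂ) ≠ 0 :=
        (Polynomial.map_ne_zero_iff (algebraMap ℝ ℂ).injective).mpr hq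
      have heqset : {x : ℂ | aeval x q = 0} = {x : ℂ | (q.map (algebraMap ℝ ℂ)).IsRoot x} := by
        ext x
        simp only [Set.mem_setOf_eq, Polynomial.IsRoot.def, Polynomial.eval_map,
          ← Polynomial.aeval_def]
      rw [heqset]
      exact Polynomial.finite_setOf_isRoot hmap
    have hT : {z : ℂ | aeval (-z) q = 0}.Finite :=
      hS.preimage (neg_injective.injOn)
    have hcl : IsClosed ({z : ℂ | aeval (-z) q = 0} \ {z₀}) :=
      (hT.subset diff_subset).isClosed
    have hmem : ({z : ℂ | aeval (-z) q = 0} \ {z₀})ᶜ ∈ 𝓝 z₀ :=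
      hcl.isOpen_compl.mem_nhds (by simp)
    filter_upwards [nhdsWithin_le_nhds hmem, self_mem_nhdsWithin] with z h1 h2
    intro hz
    exact h1 ⟨hz, h2⟩
  -- Step 1: Re z₀ ≤ 0
  have hre_le : z₀.re ≤ 0 := by
    by_contra h
    push_neg at h
    have := hpos z₀ h hqz₀
    rw [hCz₀] at this
    simp at this
  -- Step 2: the order of C at z₀ is finite
  have htop : analyticOrderAt C z₀ ≠ ⊤ := by
    intro htop
    have hev : ∀ᶠ z in 𝓝 z₀, C z = 0 := analyticOrderAt_eq_top.mp htop
    rcases lt_or_eq_of_le hre_le with hlt | heq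
    · -- Re z₀ < 0 : use oddness
      have hrev : ∀ᶠ z in 𝓝 z₀, z.re < 0 :=
        (isOpen_lt Complex.continuous_re continuous_const).mem_nhds hlt
      obtain ⟨z, ⟨⟨hz1, hz2⟩, hz3, hz4⟩⟩ :=
        (((hev.filter_mono nhdsWithin_le_nhds).and
          (hqev.filter_mono nhdsWithin_le_nhds)).and
          ((hrev.filter_mono nhdsWithin_le_nhds).and hqodd)).exists
      have h5 := hpos (-z) (by simpa using hz3) hz4
      rw [hodd z hz2 hz4, hz1] at h5
      simp at h5
    · -- Re z₀ = 0 : find a nearby zero with positive real part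
      obtain ⟨δ, hδ, hball⟩ := Metric.eventually_nhds_iff.mp (hev.and hqev)
      set z : ℂ := z₀ + (δ / 2 : ℝ) with hzdef
      have hdist : dist z z₀ < δ := by
        simp only [hzdef, Complex.dist_eq, add_sub_cancel_left]
        rw [Complex.norm_real, Real.norm_eq_abs]
        rw [abs_of_pos (by linarith)]
        linarith
      obtain ⟨hz1, hz2⟩ := hball hdist
      have h5 := hpos z (by simp [hzdef, ← heq]; linarith) hz2
      rw [hz1] at h5
      simp at h5
  -- Step 3: local factorization C z = (z - z₀)^n g z with g z₀ ≠ 0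
  obtain ⟨n, hn⟩ := WithTop.ne_top_iff_exists.mp htop
  obtain ⟨g, hg, hgz, hloc⟩ := (hFa.analyticOrderAt_eq_natCast (n := n)).mp hn.symm
  set a : ℂ := g z₀ with ha
  have hn1 : 1 ≤ n := by
    rcases Nat.eq_zero_or_pos n with h0 | h
    · exfalso
      have := hloc.self_of_nhds
      rw [hCz₀, h0] at this
      simp at this
      exact hgz this.symm
    · exact h
  -- the two directional sign lemmas
  have hdir : ∀ w : ℂ, (∀ᶠ ε : ℝ in 𝓝[>] (0 : ℝ), 0 < (C (z₀ + (ε : ℂ) * w)).re) →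
      0 ≤ (w ^ n * a).re := by
    intro w hw
    refine key_limit (g := fun z => w ^ n * g z) (w := w)
      (continuousAt_const.mul hg.continuousAt) ?_
    have hev' := (tendsto_ray z₀ w).eventually hloc
    filter_upwards [hw, hev', self_mem_nhdsWithin] with ε h1 h2 (h3 : (0:ℝ) < ε)
    rw [h2, smul_eq_mul, add_sub_cancel_left, mul_pow, mul_assoc,
      ← Complex.ofReal_pow, Complex.re_ofReal_mul] at h1
    by_contra hX
    push_neg at hX
    nlinarith [pow_pos h3 n]
  have hdir' : ∀ w : ℂ, (∀ᶠ ε : ℝ in 𝓝[>] (0 : ℝ), (C (z₀ + (ε : ℂ) * w)).re < 0) →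
      (w ^ n * a).re ≤ 0 := by
    intro w hw
    have : 0 ≤ ((-(w ^ n)) * a).re := by
      refine key_limit (g := fun z => (-(w ^ n)) * g z) (w := w)
        (continuousAt_const.mul hg.continuousAt) ?_
      have hev' := (tendsto_ray z₀ w).eventually hloc
      filter_upwards [hw, hev', self_mem_nhdsWithin] with ε h1 h2 (h3 : (0:ℝ) < ε)
      rw [h2, smul_eq_mul, add_sub_cancel_left, mul_pow, mul_assoc,
        ← Complex.ofReal_pow, Complex.re_ofReal_mul] at h1
      have h4 : (w ^ n * g (z₀ + (ε : ℂ) * w)).re ≤ 0 := by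
        nlinarith [pow_pos h3 n]
      simpa using h4
    simpa using this
  -- Step 4: exclude Re z₀ < 0
  have hre0 : z₀.re = 0 := by
    rcases lt_or_eq_of_le hre_le with hlt | heq
    · exfalso
      -- for every direction w ≠ 0, Re(wⁿ a) ≤ 0
      have hall : ∀ w : ℂ, w ≠ 0 → (w ^ n * a).re ≤ 0 := by
        intro w hw0
        refine hdir' w ?_
        have hrev : ∀ᶠ z in 𝓝 z₀, z.re < 0 :=
          (isOpen_lt Complex.continuous_re continuous_const).mem_nhds hlt
        have e1 := (tendsto_ray z₀ w).eventually (hrev.and hqev)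
        have e2 := (tendsto_ray' z₀ hw0).eventually hqodd
        filter_upwards [e1, e2] with ε ⟨h1, h2⟩ h3
        have h5 := hpos (-(z₀ + (ε : ℂ) * w))
          (by simp only [Complex.neg_re]; linarith) h3
        rw [hodd _ h2 h3] at h5
        simpa using h5
      -- hence Re(u a) ≤ 0 for every u, contradiction with u = conj a
      have hu : ∀ u : ℂ, u ≠ 0 → (u * a).re ≤ 0 := by
        intro u hu0
        obtain ⟨w, hwn⟩ := Complex.isAlgClosed.exists_pow_nat_eq u (lt_of_lt_of_le one_pos hn1)
        have hw0 : w ≠ 0 := by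
          rintro rfl
          rw [zero_pow (by omega)] at hwn
          exact hu0 hwn.symm
        simpa [hwn] using hall w hw0
      have h1 := hu (starRingEnd ℂ a) (by simpa using hgz)
      rw [mul_comm, Complex.mul_conj] at h1
      simp only [Complex.ofReal_re] at h1
      exact hgz (Complex.normSq_eq_zero.mp (le_antisymm h1 (Complex.normSq_nonneg a)))
    · exact heq.symm ▸ rfl
  -- Step 5: for directions with Re w > 0, Re(wⁿ a) ≥ 0
  have hkey : ∀ w : ℂ, 0 < w.re → 0 ≤ (w ^ n * a).re := by
    intro w hw
    refine hdir w ?_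
    have e1 := (tendsto_ray z₀ w).eventually hqev
    filter_upwards [e1, self_mem_nhdsWithin] with ε h1 (h2 : (0:ℝ) < ε)
    refine hpos _ ?_ h1
    have : (z₀ + (ε : ℂ) * w).re = ε * w.re := by
      simp [Complex.add_re, Complex.re_ofReal_mul, hre0]
    rw [this]
    positivity
  -- Step 6: n = 1
  have hne : n = 1 := by
    by_contra hne1
    have hn2 : 2 ≤ n := by omega
    have hφ : ∀ θ : ℝ, -Real.pi < θ → θ < Real.pi →
        0 ≤ Real.cos θ * a.re - Real.sin θ * a.im := by
      intro θ h1 h2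
      have hn0 : (0:ℝ) < (n : ℝ) := by positivity
      have hcos : 0 < (Complex.exp ((θ / n : ℝ) * I)).re := by
        rw [Complex.exp_ofReal_mul_I_re]
        apply Real.cos_pos_of_mem_Ioo
        constructor
        · rw [neg_lt, ← neg_div]
          rw [div_lt_iff₀ hn0]
          have hcast : (2:ℝ) ≤ (n : ℝ) := by exact_mod_cast hn2
          nlinarith [Real.pi_pos]
        · rw [div_lt_iff₀ hn0]
          have hcast : (2:ℝ) ≤ (n : ℝ) := by exact_mod_cast hn2
          nlinarith [Real.pi_pos]
      have h3 := hkey _ hcos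
      rw [← Complex.exp_nat_mul] at h3
      have h4 : (n : ℂ) * ((θ / n : ℝ) * I) = (θ : ℂ) * I := by
        push_cast
        rw [← mul_assoc, mul_div_cancel₀]
        exact_mod_cast hn0.ne'
      rw [h4, re_exp_mul] at h3
      exact h3
    have pi4 : -Real.pi < Real.pi / 4 ∧ Real.pi / 4 < Real.pi := by
      constructor <;> nlinarith [Real.pi_pos]
    have pi2 : -Real.pi < Real.pi / 2 ∧ Real.pi / 2 < Real.pi := by
      constructor <;> nlinarith [Real.pi_pos]
    have e1 := hφ (Real.pi / 2) pi2.1 pi2.2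
    have e2 := hφ (-(Real.pi / 2)) (by linarith [pi2.2]) (by linarith [pi2.1, Real.pi_pos])
    have e3 := hφ (Real.pi / 4) pi4.1 pi4.2
    have e4 := hφ (Real.pi / 4 - Real.pi) (by nlinarith [Real.pi_pos]) (by nlinarith [Real.pi_pos])
    rw [Real.cos_pi_div_two, Real.sin_pi_div_two] at e1
    rw [Real.cos_neg, Real.sin_neg, Real.cos_pi_div_two, Real.sin_pi_div_two] at e2
    have him : a.im = 0 := by linarith
    rw [← neg_sub Real.pi, Real.cos_neg, Real.sin_neg, Real.cos_pi_sub, Real.sin_pi_sub] at e4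
    rw [him] at e3 e4
    have hc4 : 0 < Real.cos (Real.pi / 4) := Real.cos_pos_of_mem_Ioo
      ⟨by nlinarith [Real.pi_pos], by nlinarith [Real.pi_pos]⟩
    have hre : a.re = 0 := by
      simp only [mul_zero, sub_zero] at e3 e4
      nlinarith
    exact hgz (Complex.ext hre him)
  -- Step 7: compute the derivative
  have hderiv : deriv C z₀ = a := by
    have hCg : C =ᶠ[𝓝 z₀] fun z => (z - z₀) * g z := by
      filter_upwards [hloc] with z hz
      rw [hz, hne]
      simp [smul_eq_mul]
    rw [hCg.deriv_eq]
    have hd : HasDerivAt (fun z : ℂ => (z - z₀) * g z)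
        (1 * g z₀ + (z₀ - z₀) * deriv g z₀) z₀ :=
      ((hasDerivAt_id z₀).sub_const z₀).mul hg.differentiableAt.hasDerivAt
    have := hd.deriv
    simpa using this
  -- Step 8: conclude
  subst hne
  have hIm : a.im = 0 ∧ 0 ≤ a.re := by
    have e0 := hkey 1 (by norm_num)
    simp only [one_pow, one_mul] at e0
    have eI : ∀ ε : ℝ, 0 < ε → 0 ≤ ε * a.re - a.im := by
      intro ε hε
      have := hkey ((ε : ℂ) + I) (by simp [Complex.add_re]; exact hε)
      rw [pow_one, add_mul] at this
      simpa [Complex.add_re, Complex.re_ofReal_mul, Complex.I_mul_re] using this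
    have eI' : ∀ ε : ℝ, 0 < ε → 0 ≤ ε * a.re + a.im := by
      intro ε hε
      have := hkey ((ε : ℂ) - I) (by simp [Complex.sub_re]; exact hε)
      rw [pow_one, sub_mul] at this
      simpa [Complex.sub_re, Complex.re_ofReal_mul, Complex.I_mul_re] using this
    have l1 : 0 ≤ -a.im := by
      have t : Tendsto (fun ε : ℝ => ε * a.re - a.im) (𝓝[>] (0:ℝ)) (𝓝 (0 * a.re - a.im)) :=
        (((continuous_id.mul continuous_const).sub continuous_const).tendsto 0).mono_left
          nhdsWithin_le_nhds
      have := ge_of_tendsto t (by filter_upwards [self_mem_nhdsWithin] with ε hε using eI ε hε)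
      simpa using this
    have l2 : 0 ≤ a.im := by
      have t : Tendsto (fun ε : ℝ => ε * a.re + a.im) (𝓝[>] (0:ℝ)) (𝓝 (0 * a.re + a.im)) :=
        (((continuous_id.mul continuous_const).add continuous_const).tendsto 0).mono_left
          nhdsWithin_le_nhds
      have := ge_of_tendsto t (by filter_upwards [self_mem_nhdsWithin] with ε hε using eI' ε hε)
      simpa using this
    exact ⟨le_antisymm (by linarith) l2, e0⟩
  refine ⟨hre0, ?_, by rw [hderiv]; exact hIm.1⟩
  rw [hderiv]
  rcases hIm.2.lt_or_eq with h | h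
  · exact h
  · exfalso
    exact hgz (Complex.ext h.symm hIm.1)
end

section
/- Let n ≥ 0, d₁ > 0, and a₁ > b₁ > a₂ > ... > a_n > b_n ≥ 0 be real numbers. Define C(z) = d₁ z · Π_{k=1}^n (z² + a_k²)/(z² + b_k²). Then Re z > 0 implies Re C(z) > 0. -/
open Finset Polynomial

lemma aux_ne {z : ℂ} (hz : 0 < z.re) (b : ℝ) : z ^ 2 + (b : ℂ) ^ 2 ≠ 0 := by
  intro h
  have hfac : (z - (b : ℂ) * Complex.I) * (z + (b : ℂ) * Complex.I) = 0 := by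
    linear_combination h - (b : ℂ) ^ 2 * Complex.I_sq
  rcases mul_eq_zero.mp hfac with h1 | h1
  · have : z = (b : ℂ) * Complex.I := by linear_combination h1
    rw [this] at hz; simp at hz
  · have : z = -((b : ℂ) * Complex.I) := by linear_combination h1
    rw [this] at hz; simp at hz

lemma aux_re_div {z : ℂ} (hz : 0 < z.re) (b : ℝ) : 0 < (z / (z ^ 2 + (b : ℂ) ^ 2)).re := by
  have hne := aux_ne hz b
  rw [Complex.div_re]
  have hns : 0 < Complex.normSq (z ^ 2 + (b : ℂ) ^ 2) := Complex.normSq_pos.mpr hne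
  rw [← add_div]
  apply div_pos _ hns
  have h1 : (z ^ 2 + (b : ℂ) ^ 2).re = z.re ^ 2 - z.im ^ 2 + b ^ 2 := by
    simp [pow_two, Complex.mul_re]; try ring
  have h2 : (z ^ 2 + (b : ℂ) ^ 2).im = 2 * z.re * z.im := by
    simp [pow_two, Complex.mul_im]; try ring
  rw [h1, h2]
  nlinarith [sq_nonneg z.im, sq_nonneg b, mul_pos hz hz]

open Finset Polynomial

lemma polyIdent {n : ℕ} (α β c : Fin n → ℝ) (hinj : Function.Injective β)
    (hc : ∀ j, c j * ∏ k ∈ Finset.univ.erase j, (β k - β j) = ∏ k, (α k - β j)) :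
    (∏ k, (X + C (α k)) : ℝ[X]) =
      ∏ k, (X + C (β k)) + ∑ j, C (c j) * ∏ k ∈ Finset.univ.erase j, (X + C (β k)) := by
  rcases Nat.eq_zero_or_pos n with h0 | hn
  · subst h0; simp
  rw [← sub_eq_zero]
  set A : ℝ[X] := ∏ k, (X + C (α k)) with hA
  set B : ℝ[X] := ∏ k, (X + C (β k)) with hB
  set S : ℝ[X] := ∑ j, C (c j) * ∏ k ∈ Finset.univ.erase j, (X + C (β k)) with hS
  have hAm : A.Monic := monic_prod_of_monic _ _ fun k _ => monic_X_add_C _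
  have hBm : B.Monic := monic_prod_of_monic _ _ fun k _ => monic_X_add_C _
  have hdegA : A.degree = (n : ℕ) := by
    rw [hA, degree_prod]
    simp [degree_X_add_C]
  have hdegB : B.degree = (n : ℕ) := by
    rw [hB, degree_prod]
    simp [degree_X_add_C]
  have hdegS : S.degree < (n : ℕ) := by
    rw [hS]
    apply lt_of_le_of_lt (degree_sum_le _ _)
    apply Finset.sup_lt_iff (by exact_mod_cast WithBot.bot_lt_coe n) |>.mpr
    intro j _
    apply lt_of_le_of_lt (degree_mul_le _ _)
    have h1 : (∏ k ∈ Finset.univ.erase j, (X + C (β k)) : ℝ[X]).degree = ((n - 1 : ℕ) : WithBot ℕ) := by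
      rw [degree_prod]
      simp only [degree_X_add_C]
      rw [Finset.sum_const, Finset.card_erase_of_mem (Finset.mem_univ j), Finset.card_univ,
        Fintype.card_fin]
      simp
    have h2 : (C (c j) : ℝ[X]).degree ≤ 0 := degree_C_le
    calc (C (c j) : ℝ[X]).degree + _ ≤ 0 + ((n - 1 : ℕ) : WithBot ℕ) := by
          exact add_le_add h2 (le_of_eq h1)
      _ < (n : ℕ) := by
          rw [zero_add]
          exact_mod_cast Nat.sub_lt hn one_pos
  apply eq_zero_of_natDegree_lt_card_of_eval_eq_zero _ (f := fun j : Fin n => -β j)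
    (fun i j h => hinj (neg_injective h))
  · intro j
    simp only [eval_sub, eval_add, eval_prod, eval_finset_sum, eval_mul, eval_X, eval_C, hA, hB, hS]
    have hBz : (∏ k, (-β j + β k)) = 0 :=
      Finset.prod_eq_zero (Finset.mem_univ j) (neg_add_cancel (β j))
    have hSz : (∑ i, c i * ∏ k ∈ Finset.univ.erase i, (-β j + β k))
        = c j * ∏ k ∈ Finset.univ.erase j, (-β j + β k) := by
      apply Finset.sum_eq_single
      · intro i _ hij
        rw [Finset.prod_eq_zero (Finset.mem_erase.mpr ⟨Ne.symm hij, Finset.mem_univ j⟩)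
          (neg_add_cancel (β j)), mul_zero]
      · intro h; exact absurd (Finset.mem_univ j) h
    rw [hBz, hSz, zero_add]
    simp only [neg_add_eq_sub]
    rw [hc j, sub_self]
  · rw [Fintype.card_fin]
    by_cases hp : A - (B + S) = 0
    · rw [hp]; simpa using hn
    rw [natDegree_lt_iff_degree_lt hp]
    have h1 : (A - B).degree < (n : ℕ) := by
      rw [← hdegA]
      exact degree_sub_lt (hdegA.trans hdegB.symm) hAm.ne_zero
        (by rw [hAm.leadingCoeff, hBm.leadingCoeff])
    have h2 : A - (B + S) = (A - B) - S := by ring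
    rw [h2]
    exact lt_of_le_of_lt (degree_sub_le _ _) (max_lt h1 hdegS)



/-- Let `n ≥ 0`, `d₁ > 0` and `a₁ > b₁ > a₂ > ⋯ > a_n > b_n ≥ 0` be real numbers.
Then `C(z) = d₁ z ∏ₖ (z² + aₖ²)/(z² + bₖ²)` maps the open right half-plane into
itself. -/
theorem stmt_4 (n : ℕ) (d₁ : ℝ) (hd : 0 < d₁) (a b : Fin n → ℝ)
    (hab : ∀ k : Fin n, b k < a k)
    (hba : ∀ (k : ℕ) (h : k + 1 < n), a ⟨k + 1, h⟩ < b ⟨k, Nat.lt_of_succ_lt h⟩)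
    (hb0 : ∀ k : Fin n, 0 ≤ b k) :
    ∀ z : ℂ, 0 < z.re →
      0 < ((d₁ : ℂ) * z *
        ∏ k : Fin n, (z ^ 2 + (a k : ℂ) ^ 2) / (z ^ 2 + (b k : ℂ) ^ 2)).re := by
  -- ordering helper
  have hord : ∀ i j : Fin n, i < j → a j < b i := by
    intro i j hij
    have key : ∀ k : ℕ, (i : ℕ) + 1 ≤ k → ∀ (hk : k < n), a ⟨k, hk⟩ < b i := by
      intro k hk1
      induction k, hk1 using Nat.le_induction with
      | base => intro hk; have := hba i hk; simpa using this
      | succ k hk1 ih =>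
        intro hk2
        have hkn : k < n := Nat.lt_of_succ_lt hk2
        calc a ⟨k + 1, hk2⟩ < b ⟨k, hkn⟩ := hba k hk2
          _ < a ⟨k, hkn⟩ := hab _
          _ < b i := ih hkn
    have := key j hij j.isLt
    simpa using this
  intro z hz
  have hv : ∀ k : Fin n, z ^ 2 + (b k : ℂ) ^ 2 ≠ 0 := fun k => aux_ne hz (b k)
  -- strict anti of b and of squares
  have hblt : ∀ i j : Fin n, i < j → b j < b i := fun i j h => (hab j).trans (hord i j h)
  have ha0 : ∀ k : Fin n, 0 < a k := fun k => lt_of_le_of_lt (hb0 k) (hab k)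
  have hbsq : ∀ i j : Fin n, i < j → b j ^ 2 < b i ^ 2 := fun i j h =>
    pow_lt_pow_left₀ (hblt i j h) (hb0 j) two_ne_zero
  have hbinj : Function.Injective (fun j : Fin n => b j ^ 2) := by
    intro i j hij
    by_contra hne
    rcases lt_or_gt_of_ne hne with h | h
    · exact absurd hij (ne_of_gt (hbsq i j h))
    · exact absurd hij.symm (ne_of_gt (hbsq j i h))
  -- the residues
  set c : Fin n → ℝ := fun j =>
    (a j ^ 2 - b j ^ 2) * ∏ k ∈ Finset.univ.erase j, ((a k ^ 2 - b j ^ 2) / (b k ^ 2 - b j ^ 2))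
    with hcdef
  have hfac : ∀ j : Fin n, ∀ k ∈ Finset.univ.erase j,
      0 < (a k ^ 2 - b j ^ 2) / (b k ^ 2 - b j ^ 2) := by
    intro j k hk
    have hkj : k ≠ j := (Finset.mem_erase.mp hk).1
    rcases lt_or_gt_of_ne hkj with h | h
    · -- k < j : b j < b k < a k
      have h1 : b j < a k := lt_trans ((hab j).trans (hord k j h)) (hab k)
      have h2 : b j ^ 2 < a k ^ 2 := pow_lt_pow_left₀ h1 (hb0 j) two_ne_zero
      have h3 : b j ^ 2 < b k ^ 2 := hbsq k j h
      exact div_pos (by linarith) (by linarith)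
    · -- j < k : b k < a k < b j
      have h1 : a k < b j := hord j k h
      have h2 : a k ^ 2 < b j ^ 2 := pow_lt_pow_left₀ h1 (le_of_lt (ha0 k)) two_ne_zero
      have h3 : b k ^ 2 < b j ^ 2 := hbsq j k h
      exact div_pos_of_neg_of_neg (by linarith) (by linarith)
  have hcpos : ∀ j, 0 < c j := by
    intro j
    apply mul_pos
    · have := pow_lt_pow_left₀ (hab j) (hb0 j) (two_ne_zero (α := ℕ))
      linarith
    · exact Finset.prod_pos (hfac j)
  have hc : ∀ j, c j * ∏ k ∈ Finset.univ.erase j, (b k ^ 2 - b j ^ 2)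
      = ∏ k, (a k ^ 2 - b j ^ 2) := by
    intro j
    rw [hcdef, mul_assoc, ← Finset.prod_mul_distrib]
    have : ∀ k ∈ Finset.univ.erase j,
        (a k ^ 2 - b j ^ 2) / (b k ^ 2 - b j ^ 2) * (b k ^ 2 - b j ^ 2)
          = (a k ^ 2 - b j ^ 2) := by
      intro k hk
      have hkj : k ≠ j := (Finset.mem_erase.mp hk).1
      have : b k ^ 2 - b j ^ 2 ≠ 0 := sub_ne_zero.mpr (fun h => hkj (hbinj h))
      field_simp
    rw [Finset.prod_congr rfl this, ← Finset.mul_prod_erase Finset.univ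
      (fun k => a k ^ 2 - b j ^ 2) (Finset.mem_univ j)]
  -- the polynomial identity, evaluated at z^2
  have hpoly := polyIdent (fun k => a k ^ 2) (fun k => b k ^ 2) c hbinj hc
  have hevc := congrArg (fun p : Polynomial ℝ => (Polynomial.aeval (z ^ 2) : Polynomial ℝ →ₐ[ℝ] ℂ) p) hpoly
  simp only [map_prod, map_add, map_sum, map_mul, Polynomial.aeval_X, Polynomial.aeval_C,
    Complex.coe_algebraMap] at hevc
  push_cast at hevc
  -- key : product form equals partial fraction form
  have hvprod : (∏ k, (z ^ 2 + (b k : ℂ) ^ 2)) ≠ 0 :=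
    Finset.prod_ne_zero_iff.mpr fun k _ => hv k
  have key : (∏ k : Fin n, (z ^ 2 + (a k : ℂ) ^ 2) / (z ^ 2 + (b k : ℂ) ^ 2))
      = 1 + ∑ j, (c j : ℂ) / (z ^ 2 + (b j : ℂ) ^ 2) := by
    rw [Finset.prod_div_distrib, div_eq_iff hvprod, add_mul, one_mul, Finset.sum_mul, hevc]
    congr 1
    apply Finset.sum_congr rfl
    intro j _
    rw [← Finset.mul_prod_erase Finset.univ (fun k => z ^ 2 + (b k : ℂ) ^ 2)
      (Finset.mem_univ j)]
    have := hv j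
    field_simp
  rw [key]
  have expand : (d₁ : ℂ) * z * (1 + ∑ j, (c j : ℂ) / (z ^ 2 + (b j : ℂ) ^ 2))
      = (d₁ : ℂ) * z + ∑ j, ((d₁ * c j : ℝ) : ℂ) * (z / (z ^ 2 + (b j : ℂ) ^ 2)) := by
    rw [mul_add, mul_one, Finset.mul_sum]
    congr 1
    apply Finset.sum_congr rfl
    intro j _
    push_cast
    ring
  rw [expand, Complex.add_re, Complex.re_sum]
  have h1 : 0 < ((d₁ : ℂ) * z).re := by
    rw [Complex.re_ofReal_mul]; exact mul_pos hd hz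
  have h2 : 0 ≤ ∑ j, (((d₁ * c j : ℝ) : ℂ) * (z / (z ^ 2 + (b j : ℂ) ^ 2))).re := by
    apply Finset.sum_nonneg
    intro j _
    rw [Complex.re_ofReal_mul]
    exact le_of_lt (mul_pos (mul_pos hd (hcpos j)) (aux_re_div hz (b j)))
  linarith
end

section
/- Let C(z) = d₁ z · Π_{k=1}^n (z² + a_k²)/(z² + b_k²) with d₁ > 0 and a₁ > b₁ > a₂ > ... > b_n ≥ 0, b_n ≠ 0, and define r(z) = 1/(C(z) − d₁ z). Then every zero of r lies on the imaginary axis; specifically the zeros are ±i b₁, ..., ±i b_n, and r'(±i b_l) > 0 for each l. -/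
open Complex Finset Filter Topology

private lemma chain_lemma {n : ℕ} (a b : Fin n → ℝ) (hab : ∀ k : Fin n, b k < a k)
    (hba : ∀ (k : ℕ) (h : k + 1 < n), a ⟨k + 1, h⟩ < b ⟨k, Nat.lt_of_succ_lt h⟩) :
    ∀ (i j : ℕ) (hi : i < n) (hj : j < n), i < j →
      a ⟨j, hj⟩ < b ⟨i, hi⟩ ∧ b ⟨j, hj⟩ < b ⟨i, hi⟩ := by
  intro i j
  induction j with
  | zero => omega
  | succ m ih =>
    intro hi hj hij
    rcases Nat.lt_or_ge i m with h | h
    · have hm : m < n := Nat.lt_of_succ_lt hj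
      obtain ⟨h1, h2⟩ := ih hi hm h
      have h3 : a ⟨m + 1, hj⟩ < b ⟨m, hm⟩ := hba m hj
      exact ⟨h3.trans h2, lt_trans (lt_trans (hab _) h3) h2⟩
    · have him : i = m := by omega
      subst him
      have h3 : a ⟨i + 1, hj⟩ < b ⟨i, hi⟩ := hba i hj
      exact ⟨h3, (hab _).trans h3⟩

private lemma key_at {n : ℕ} {d₁ : ℝ} (hd : 0 < d₁) {a b : Fin n → ℝ}
    (hab : ∀ k : Fin n, b k < a k)
    (hba : ∀ (k : ℕ) (h : k + 1 < n), a ⟨k + 1, h⟩ < b ⟨k, Nat.lt_of_succ_lt h⟩)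
    (hb0 : ∀ k : Fin n, 0 < b k)
    {r : ℂ → ℂ}
    (hr : ∀ z : ℂ, (∏ k : Fin n, (z ^ 2 + (b k : ℂ) ^ 2)) ≠ 0 →
      r z = ((d₁ : ℂ) * z * ∏ k : Fin n, (z ^ 2 + (a k : ℂ) ^ 2) / (z ^ 2 + (b k : ℂ) ^ 2)
        - (d₁ : ℂ) * z)⁻¹)
    (l : Fin n) (z₀ : ℂ)
    (hz₀ : z₀ = Complex.I * (b l : ℂ) ∨ z₀ = -(Complex.I * (b l : ℂ)))
    (hdiff : DifferentiableAt ℂ r z₀) :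
    r z₀ = 0 ∧ 0 < (deriv r z₀).re ∧ (deriv r z₀).im = 0 := by
  have hβ : 0 < b l := hb0 l
  have hβc : ((b l : ℝ) : ℂ) ≠ 0 := Complex.ofReal_ne_zero.2 hβ.ne'
  have hz₀sq : z₀ ^ 2 = -((b l : ℂ) ^ 2) := by
    rcases hz₀ with h | h <;> subst h <;>
      simp [mul_pow, Complex.I_sq, neg_pow]
  have hz₀ne : z₀ ≠ 0 := by
    rcases hz₀ with h | h <;> subst h <;> simp [Complex.I_ne_zero, hβc]
  -- sign facts
  have hsign : ∀ k ∈ Finset.univ.erase l, 0 < (a k ^ 2 - b l ^ 2) / (b k ^ 2 - b l ^ 2) := by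
    intro k hk
    have hkl : k ≠ l := Finset.ne_of_mem_erase hk
    rcases lt_trichotomy (k : ℕ) (l : ℕ) with h | h | h
    · obtain ⟨h1, h2⟩ := chain_lemma a b hab hba k l k.isLt l.isLt h
      simp only [Fin.eta] at h1 h2
      have h3 := hab k
      apply div_pos <;> nlinarith
    · exact absurd (Fin.ext h) hkl
    · obtain ⟨h1, h2⟩ := chain_lemma a b hab hba l k l.isLt k.isLt h
      simp only [Fin.eta] at h1 h2
      have hbk := hb0 k
      have h3 := hab k
      apply div_pos_of_neg_of_neg <;> nlinarith
  set ρ : ℝ := d₁ / 2 * (a l ^ 2 - b l ^ 2) *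
      ∏ k ∈ Finset.univ.erase l, (a k ^ 2 - b l ^ 2) / (b k ^ 2 - b l ^ 2) with hρdef
  have hρpos : 0 < ρ := by
    have h1 : 0 < a l ^ 2 - b l ^ 2 := by nlinarith [hab l]
    exact mul_pos (mul_pos (by linarith) h1) (Finset.prod_pos hsign)
  have hρc : ((ρ : ℝ) : ℂ) ≠ 0 := Complex.ofReal_ne_zero.2 hρpos.ne'
  -- complex denominators away from l
  have hbk : ∀ k : Fin n, k ∈ Finset.univ.erase l → ((b k : ℂ) ^ 2 - (b l : ℂ) ^ 2) ≠ 0 := by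
    intro k hk
    have h1 : (b k ^ 2 - b l ^ 2 : ℝ) ≠ 0 := by
      intro hh
      have := hsign k hk
      rw [hh] at this
      simp at this
    have : ((b k ^ 2 - b l ^ 2 : ℝ) : ℂ) ≠ 0 := Complex.ofReal_ne_zero.2 h1
    push_cast at this
    exact this
  set P : ℂ → ℂ := fun z =>
      ∏ k ∈ Finset.univ.erase l, (z ^ 2 + (a k : ℂ) ^ 2) / (z ^ 2 + (b k : ℂ) ^ 2) with hPdef
  set F : ℂ → ℂ := fun z =>
      (d₁ : ℂ) * z * ((z ^ 2 + (a l : ℂ) ^ 2) / (z + z₀) * P z - (z - z₀)) with hFdef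
  -- value of P and F at z₀
  have hPz₀ : P z₀ =
      ((∏ k ∈ Finset.univ.erase l, (a k ^ 2 - b l ^ 2) / (b k ^ 2 - b l ^ 2) : ℝ) : ℂ) := by
    rw [hPdef, Complex.ofReal_prod]
    refine Finset.prod_congr rfl fun k hk => ?_
    rw [hz₀sq]
    push_cast
    ring
  have hFz₀ : F z₀ = (ρ : ℂ) := by
    have e2 : z₀ * ((z₀ ^ 2 + (a l : ℂ) ^ 2) / (z₀ + z₀)) = (z₀ ^ 2 + (a l : ℂ) ^ 2) / 2 := by
      field_simp [hz₀ne]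
      ring
    have e3 : F z₀ = (d₁ : ℂ) * (z₀ * ((z₀ ^ 2 + (a l : ℂ) ^ 2) / (z₀ + z₀))) * P z₀ := by
      rw [hFdef]
      ring
    rw [e3, e2, hz₀sq, hPz₀, hρdef]
    push_cast
    ring
  -- continuity of F at z₀
  have hdenl : ∀ k ∈ Finset.univ.erase l, z₀ ^ 2 + (b k : ℂ) ^ 2 ≠ 0 := by
    intro k hk
    rw [hz₀sq]
    intro hh
    exact hbk k hk (by linear_combination hh)
  have hz₀add : z₀ + z₀ ≠ 0 := by
    intro hh
    apply hz₀ne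
    have : (2 : ℂ) * z₀ = 0 := by linear_combination hh
    simpa using this
  have hPcont : Tendsto P (𝓝 z₀) (𝓝 (P z₀)) := by
    rw [hPdef]
    apply tendsto_finset_prod
    intro k hk
    exact Tendsto.div
      (((continuous_pow 2).add continuous_const).tendsto z₀)
      (((continuous_pow 2).add continuous_const).tendsto z₀)
      (hdenl k hk)
  have hFcont : Tendsto F (𝓝 z₀) (𝓝 (F z₀)) := by
    rw [hFdef]
    simp only
    exact Tendsto.mul
      ((continuous_const.mul continuous_id).tendsto z₀)
      (Tendsto.sub
        (Tendsto.mul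
          (Tendsto.div (((continuous_pow 2).add continuous_const).tendsto z₀)
            ((continuous_id.add continuous_const).tendsto z₀) hz₀add)
          hPcont)
        ((continuous_id.sub continuous_const).tendsto z₀))
  -- eventually the product is nonzero
  have hfin : ∀ᶠ z in 𝓝[≠] z₀, (∏ k : Fin n, (z ^ 2 + (b k : ℂ) ^ 2)) ≠ 0 := by
    set S : Finset ℂ := (Finset.univ.image fun k : Fin n => Complex.I * (b k : ℂ)) ∪
      (Finset.univ.image fun k : Fin n => -(Complex.I * (b k : ℂ))) with hS
    have hT : ∀ᶠ z in 𝓝 z₀, z ∉ (S.erase z₀ : Finset ℂ) := by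
      have hcl : IsClosed ((S.erase z₀ : Finset ℂ) : Set ℂ) := (S.erase z₀).finite_toSet.isClosed
      have : ((S.erase z₀ : Finset ℂ) : Set ℂ)ᶜ ∈ 𝓝 z₀ :=
        hcl.isOpen_compl.mem_nhds (by simp)
      filter_upwards [this] with z hz using hz
    filter_upwards [hT.filter_mono nhdsWithin_le_nhds, self_mem_nhdsWithin] with z hz hz'
    have hzne : z ≠ z₀ := hz'
    rw [Finset.prod_ne_zero_iff]
    intro k _
    intro hh
    have hfac : (z - Complex.I * (b k : ℂ)) * (z + Complex.I * (b k : ℂ)) = 0 := by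
      have : (z - Complex.I * (b k : ℂ)) * (z + Complex.I * (b k : ℂ)) =
          z ^ 2 - (Complex.I * (b k : ℂ)) ^ 2 := by ring
      rw [this]
      rw [show (Complex.I * (b k : ℂ)) ^ 2 = -((b k : ℂ) ^ 2) by
        simp [mul_pow, Complex.I_sq]]
      linear_combination hh
    have hzS : z ∈ S := by
      rcases mul_eq_zero.1 hfac with hh1 | hh1
      · exact Finset.mem_union_left _ (Finset.mem_image.2 ⟨k, Finset.mem_univ k,
          by linear_combination -hh1⟩)
      · exact Finset.mem_union_right _ (Finset.mem_image.2 ⟨k, Finset.mem_univ k,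
          by linear_combination -hh1⟩)
    exact hz (Finset.mem_erase.2 ⟨hzne, hzS⟩)
  -- eventual formula for r
  have hkey : ∀ᶠ z in 𝓝[≠] z₀, r z = (z - z₀) * (F z)⁻¹ := by
    filter_upwards [hfin, self_mem_nhdsWithin] with z hz hz'
    have hzne : z ≠ z₀ := hz'
    have hden : ∀ k : Fin n, z ^ 2 + (b k : ℂ) ^ 2 ≠ 0 := by
      rw [Finset.prod_ne_zero_iff] at hz
      exact fun k => hz k (Finset.mem_univ k)
    have hzl : z ^ 2 + (b l : ℂ) ^ 2 ≠ 0 := hden l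
    have hsub : z ^ 2 + (b l : ℂ) ^ 2 = (z - z₀) * (z + z₀) := by
      linear_combination hz₀sq
    have hzadd : z + z₀ ≠ 0 := fun hh => hzl (by rw [hsub, hh, mul_zero])
    have hzsub : z - z₀ ≠ 0 := sub_ne_zero.2 hzne
    rw [hr z hz]
    have hprod : (∏ k : Fin n, (z ^ 2 + (a k : ℂ) ^ 2) / (z ^ 2 + (b k : ℂ) ^ 2))
        = (z ^ 2 + (a l : ℂ) ^ 2) / (z ^ 2 + (b l : ℂ) ^ 2) * P z :=
      (Finset.mul_prod_erase _ _ (Finset.mem_univ l)).symm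
    have hFz : F z = (z - z₀) * ((d₁ : ℂ) * z *
        ((z ^ 2 + (a l : ℂ) ^ 2) / (z ^ 2 + (b l : ℂ) ^ 2) * P z) - (d₁ : ℂ) * z) := by
      rw [hFdef]
      simp only
      rw [hsub]
      field_simp
    rw [hprod, hFz, mul_inv, ← mul_assoc (z - z₀), mul_inv_cancel₀ hzsub, one_mul]
  -- limits
  have htend : Tendsto (fun z => (F z)⁻¹) (𝓝[≠] z₀) (𝓝 ((ρ : ℂ))⁻¹) := by
    have h1 : Tendsto F (𝓝[≠] z₀) (𝓝 (F z₀)) := hFcont.mono_left nhdsWithin_le_nhds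
    have h2 := h1.inv₀ (by rw [hFz₀]; exact hρc)
    rwa [hFz₀] at h2
  have hrz₀ : r z₀ = 0 := by
    have h2 : Tendsto (fun z => (z - z₀) * (F z)⁻¹) (𝓝[≠] z₀) (𝓝 (0 * ((ρ : ℂ))⁻¹)) := by
      have h0 : Tendsto (fun z : ℂ => z - z₀) (𝓝 z₀) (𝓝 (z₀ - z₀)) :=
        (continuous_id.sub continuous_const).tendsto z₀
      rw [sub_self] at h0
      exact Tendsto.mul (h0.mono_left nhdsWithin_le_nhds) htend
    rw [zero_mul] at h2
    have h1 : Tendsto r (𝓝[≠] z₀) (𝓝 0) := h2.congr' (EventuallyEq.symm hkey)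
    have h3 : Tendsto r (𝓝[≠] z₀) (𝓝 (r z₀)) :=
      (hdiff.continuousAt.tendsto).mono_left nhdsWithin_le_nhds
    exact tendsto_nhds_unique h3 h1
  have hslope : Tendsto (slope r z₀) (𝓝[≠] z₀) (𝓝 (((ρ : ℝ) : ℂ))⁻¹) := by
    apply htend.congr'
    filter_upwards [hkey, self_mem_nhdsWithin] with z hz hz'
    have hzsub : z - z₀ ≠ 0 := sub_ne_zero.2 (hz' : z ≠ z₀)
    rw [slope_def_field, hrz₀, sub_zero, hz, mul_comm, mul_div_assoc,
      div_self hzsub, mul_one]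
  have hD : deriv r z₀ = (((ρ : ℝ) : ℂ))⁻¹ := by
    have h1 := hdiff.hasDerivAt
    rw [hasDerivAt_iff_tendsto_slope] at h1
    exact tendsto_nhds_unique h1 hslope
  refine ⟨hrz₀, ?_, ?_⟩
  · rw [hD, ← Complex.ofReal_inv]
    simpa using inv_pos.2 hρpos
  · rw [hD, ← Complex.ofReal_inv]
    simp

/-- Let `C(z) = d₁ z ∏ₖ (z² + aₖ²)/(z² + bₖ²)` with `d₁ > 0` and strictly interlacing
`a₁ > b₁ > a₂ > ⋯ > a_n > b_n > 0`, and let `r(z) = 1/(C(z) − d₁z)` (a rational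
function, regular at `±i bₗ`).  Then every zero of `r` lies on the imaginary axis;
the points `±i b₁, …, ±i b_n` are zeros of `r`, and at each of them the derivative
`r'(±i bₗ)` is a positive real number. -/
theorem stmt_5 (n : ℕ) (d₁ : ℝ) (hd : 0 < d₁) (a b : Fin n → ℝ)
    (hab : ∀ k : Fin n, b k < a k)
    (hba : ∀ (k : ℕ) (h : k + 1 < n), a ⟨k + 1, h⟩ < b ⟨k, Nat.lt_of_succ_lt h⟩)
    (hb0 : ∀ k : Fin n, 0 < b k)
    (r : ℂ → ℂ)
    (hr : ∀ z : ℂ, (∏ k : Fin n, (z ^ 2 + (b k : ℂ) ^ 2)) ≠ 0 →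
      r z = ((d₁ : ℂ) * z * ∏ k : Fin n, (z ^ 2 + (a k : ℂ) ^ 2) / (z ^ 2 + (b k : ℂ) ^ 2)
        - (d₁ : ℂ) * z)⁻¹)
    (hdiff : ∀ l : Fin n, DifferentiableAt ℂ r (Complex.I * (b l : ℂ)) ∧
      DifferentiableAt ℂ r (-(Complex.I * (b l : ℂ)))) :
    (∀ z : ℂ, (∏ k : Fin n, (z ^ 2 + (b k : ℂ) ^ 2)) ≠ 0 →
      ((d₁ : ℂ) * z * ∏ k : Fin n, (z ^ 2 + (a k : ℂ) ^ 2) / (z ^ 2 + (b k : ℂ) ^ 2)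
        - (d₁ : ℂ) * z) ≠ 0 → r z = 0 → z.re = 0) ∧
    (∀ l : Fin n, r (Complex.I * (b l : ℂ)) = 0 ∧ r (-(Complex.I * (b l : ℂ))) = 0) ∧
    (∀ l : Fin n,
      0 < (deriv r (Complex.I * (b l : ℂ))).re ∧ (deriv r (Complex.I * (b l : ℂ))).im = 0 ∧
      0 < (deriv r (-(Complex.I * (b l : ℂ)))).re ∧
        (deriv r (-(Complex.I * (b l : ℂ)))).im = 0) := by
  have key1 := fun (l : Fin n) => key_at hd hab hba hb0 hr l _ (Or.inl rfl) (hdiff l).1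
  have key2 := fun (l : Fin n) => key_at hd hab hba hb0 hr l _ (Or.inr rfl) (hdiff l).2
  refine ⟨?_, fun l => ⟨(key1 l).1, (key2 l).1⟩,
    fun l => ⟨(key1 l).2.1, (key1 l).2.2, (key2 l).2.1, (key2 l).2.2⟩⟩
  intro z h1 h2 h3
  rw [hr z h1] at h3
  exact absurd h3 (inv_ne_zero h2)
end

section
/- Suppose c > 0 and there exist positive rationals d₁, ..., d_m such that d₁c + 1/(d₂c + 1/(... + 1/(d_m c))) = 1. Then a unit square can be tiled by finitely many rectangles, each of ratio (horizontal side over vertical side) equal to c or 1/c. -/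
/-- The continued fraction `d₁z + 1/(d₂z + 1/(⋯ + 1/(d_m z)))` (real version). -/
noncomputable def contFracR : List ℝ → ℝ → ℝ
  | [], _ => 0
  | [d], z => d * z
  | d :: e :: rest, z => d * z + (contFracR (e :: rest) z)⁻¹

/-- `S` admits a tiling by rectangles of ratio `c` or `c⁻¹`. -/
def Til (c : ℝ) (S : Set (ℝ × ℝ)) : Prop :=
  ∃ (N : ℕ) (x₁ x₂ y₁ y₂ : Fin N → ℝ),
    (∀ j, x₁ j < x₂ j ∧ y₁ j < y₂ j) ∧
    (∀ j, (x₂ j - x₁ j) / (y₂ j - y₁ j) = c ∨ (x₂ j - x₁ j) / (y₂ j - y₁ j) = c⁻¹) ∧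
    (∀ j k, j ≠ k →
      (Set.Ioo (x₁ j) (x₂ j) ×ˢ Set.Ioo (y₁ j) (y₂ j)) ∩
        (Set.Ioo (x₁ k) (x₂ k) ×ˢ Set.Ioo (y₁ k) (y₂ k)) = ∅) ∧
    (⋃ j, Set.Icc (x₁ j) (x₂ j) ×ˢ Set.Icc (y₁ j) (y₂ j)) = S

def Tileable (c a b : ℝ) : Prop :=
  0 < a ∧ 0 < b ∧ ∀ x y : ℝ, Til c (Set.Icc x (x + a) ×ˢ Set.Icc y (y + b))

lemma iUnion_fin_add {α : Type*} {m n : ℕ} (f : Fin (m + n) → Set α) :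
    (⋃ j, f j) = (⋃ i : Fin m, f (Fin.castAdd n i)) ∪ ⋃ i : Fin n, f (Fin.natAdd m i) := by
  ext p
  simp only [Set.mem_iUnion, Set.mem_union]
  constructor
  · rintro ⟨j, hj⟩
    exact Fin.addCases (motive := fun j => p ∈ f j → ((∃ i, p ∈ f (Fin.castAdd n i)) ∨
        ∃ i, p ∈ f (Fin.natAdd m i)))
      (fun i hi => Or.inl ⟨i, hi⟩) (fun i hi => Or.inr ⟨i, hi⟩) j hj
  · rintro (⟨i, hi⟩ | ⟨i, hi⟩) <;> exact ⟨_, hi⟩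

lemma Til.union {c : ℝ} {S T : Set (ℝ × ℝ)} (h1 : Til c S) (h2 : Til c T)
    (hd : Disjoint (interior S) (interior T)) : Til c (S ∪ T) := by
  obtain ⟨N, x₁, x₂, y₁, y₂, hs, hr, hdis, hU⟩ := h1
  obtain ⟨M, u₁, u₂, v₁, v₂, hs', hr', hdis', hU'⟩ := h2
  refine ⟨N + M, Fin.append x₁ u₁, Fin.append x₂ u₂, Fin.append y₁ v₁, Fin.append y₂ v₂,
    ?_, ?_, ?_, ?_⟩
  · intro j
    refine Fin.addCases ?_ ?_ j <;> intro i <;> simp [Fin.append_left, Fin.append_right] <;>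
      [exact hs i; exact hs' i]
  · intro j
    refine Fin.addCases ?_ ?_ j <;> intro i <;> simp [Fin.append_left, Fin.append_right] <;>
      [exact hr i; exact hr' i]
  · -- disjointness
    have opsubS : ∀ i : Fin N,
        Set.Ioo (x₁ i) (x₂ i) ×ˢ Set.Ioo (y₁ i) (y₂ i) ⊆ interior S := by
      intro i
      rw [(isOpen_Ioo.prod isOpen_Ioo).subset_interior_iff]
      refine Set.Subset.trans (Set.prod_mono Set.Ioo_subset_Icc_self Set.Ioo_subset_Icc_self) ?_
      rw [← hU]
      exact Set.subset_iUnion (fun j => Set.Icc (x₁ j) (x₂ j) ×ˢ Set.Icc (y₁ j) (y₂ j)) i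
    have opsubT : ∀ i : Fin M,
        Set.Ioo (u₁ i) (u₂ i) ×ˢ Set.Ioo (v₁ i) (v₂ i) ⊆ interior T := by
      intro i
      rw [(isOpen_Ioo.prod isOpen_Ioo).subset_interior_iff]
      refine Set.Subset.trans (Set.prod_mono Set.Ioo_subset_Icc_self Set.Ioo_subset_Icc_self) ?_
      rw [← hU']
      exact Set.subset_iUnion (fun j => Set.Icc (u₁ j) (u₂ j) ×ˢ Set.Icc (v₁ j) (v₂ j)) i
    intro j k
    refine Fin.addCases ?_ ?_ j <;> intro i <;> refine Fin.addCases ?_ ?_ k <;> intro i' <;>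
        intro hjk <;> simp only [Fin.append_left, Fin.append_right]
    · exact hdis i i' (fun h => hjk (by rw [h]))
    · rw [Set.eq_empty_iff_forall_notMem]
      intro p hp
      exact (hd.mono (opsubS i) (opsubT i')).ne_of_mem hp.1 hp.2 rfl
    · rw [Set.eq_empty_iff_forall_notMem]
      intro p hp
      exact (hd.symm.mono (opsubT i) (opsubS i')).ne_of_mem hp.1 hp.2 rfl
    · exact hdis' i i' (fun h => hjk (by rw [h]))
  · rw [iUnion_fin_add]
    simp only [Fin.append_left, Fin.append_right, hU, hU']

lemma Tileable.transpose {c a b : ℝ} (h : Tileable c a b) : Tileable c b a := by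
  obtain ⟨ha, hb, ht⟩ := h
  refine ⟨hb, ha, fun x y => ?_⟩
  obtain ⟨N, x₁, x₂, y₁, y₂, hs, hr, hdis, hU⟩ := ht y x
  refine ⟨N, y₁, y₂, x₁, x₂, fun j => ⟨(hs j).2, (hs j).1⟩, ?_, ?_, ?_⟩
  · intro j
    have e : (y₂ j - y₁ j) / (x₂ j - x₁ j) = ((x₂ j - x₁ j) / (y₂ j - y₁ j))⁻¹ := by
      rw [inv_div]
    rcases hr j with h' | h'
    · right; rw [e, h']
    · left; rw [e, h', inv_inv]
  · intro j k hjk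
    rw [Set.eq_empty_iff_forall_notMem]
    rintro ⟨px, py⟩ hp
    have := hdis j k hjk
    rw [Set.eq_empty_iff_forall_notMem] at this
    exact this (py, px) ⟨⟨hp.1.2, hp.1.1⟩, ⟨hp.2.2, hp.2.1⟩⟩
  · ext ⟨px, py⟩
    have := Set.ext_iff.mp hU (py, px)
    simp only [Set.mem_iUnion, Set.mem_prod] at this ⊢
    constructor
    · rintro ⟨j, hj⟩
      have := this.mp ⟨j, hj.2, hj.1⟩
      exact ⟨this.2, this.1⟩
    · intro hp
      obtain ⟨j, hj⟩ := this.mpr ⟨hp.2, hp.1⟩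
      exact ⟨j, hj.2, hj.1⟩

lemma Tileable.scale {c a b k : ℝ} (hk : 0 < k) (h : Tileable c a b) :
    Tileable c (k * a) (k * b) := by
  obtain ⟨ha, hb, ht⟩ := h
  refine ⟨mul_pos hk ha, mul_pos hk hb, fun x y => ?_⟩
  obtain ⟨N, x₁, x₂, y₁, y₂, hs, hr, hdis, hU⟩ := ht (x / k) (y / k)
  have hIoo : ∀ A B t : ℝ, t ∈ Set.Ioo (k * A) (k * B) ↔ t / k ∈ Set.Ioo A B := by
    intro A B t
    simp [Set.mem_Ioo, lt_div_iff₀ hk, div_lt_iff₀ hk, mul_comm]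
  have hIcc : ∀ A B t : ℝ, t ∈ Set.Icc (k * A) (k * B) ↔ t / k ∈ Set.Icc A B := by
    intro A B t
    simp [Set.mem_Icc, le_div_iff₀ hk, div_le_iff₀ hk, mul_comm]
  refine ⟨N, fun j => k * x₁ j, fun j => k * x₂ j, fun j => k * y₁ j, fun j => k * y₂ j,
    ?_, ?_, ?_, ?_⟩
  · intro j
    exact ⟨(mul_lt_mul_iff_right₀ hk).mpr (hs j).1, (mul_lt_mul_iff_right₀ hk).mpr (hs j).2⟩
  · intro j
    rw [← mul_sub, ← mul_sub, mul_div_mul_left _ _ hk.ne']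
    exact hr j
  · intro j j' hjj
    rw [Set.eq_empty_iff_forall_notMem]
    rintro ⟨px, py⟩ hp
    have := hdis j j' hjj
    rw [Set.eq_empty_iff_forall_notMem] at this
    refine this (px / k, py / k) ⟨⟨?_, ?_⟩, ⟨?_, ?_⟩⟩
    · exact (hIoo _ _ _).mp hp.1.1
    · exact (hIoo _ _ _).mp hp.1.2
    · exact (hIoo _ _ _).mp hp.2.1
    · exact (hIoo _ _ _).mp hp.2.2
  · ext ⟨px, py⟩
    have key := Set.ext_iff.mp hU (px / k, py / k)
    simp only [Set.mem_iUnion, Set.mem_prod] at key ⊢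
    have e1 : Set.Icc x (x + k * a) = Set.Icc (k * (x / k)) (k * (x / k + a)) := by
      rw [mul_div_cancel₀ _ hk.ne', mul_add, mul_div_cancel₀ _ hk.ne']
    have e2 : Set.Icc y (y + k * b) = Set.Icc (k * (y / k)) (k * (y / k + b)) := by
      rw [mul_div_cancel₀ _ hk.ne', mul_add, mul_div_cancel₀ _ hk.ne']
    constructor
    · rintro ⟨j, hj⟩
      have := key.mp ⟨j, ⟨(hIcc _ _ _).mp hj.1, (hIcc _ _ _).mp hj.2⟩⟩
      rw [e1, e2]
      exact ⟨(hIcc _ _ _).mpr this.1, (hIcc _ _ _).mpr this.2⟩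
    · intro hp
      rw [e1, e2] at hp
      obtain ⟨j, hj⟩ := key.mpr ⟨(hIcc _ _ _).mp hp.1, (hIcc _ _ _).mp hp.2⟩
      exact ⟨j, (hIcc _ _ _).mpr hj.1, (hIcc _ _ _).mpr hj.2⟩

lemma Tileable.hcat {c a a' b : ℝ} (h : Tileable c a b) (h' : Tileable c a' b) :
    Tileable c (a + a') b := by
  obtain ⟨ha, hb, ht⟩ := h
  obtain ⟨ha', _, ht'⟩ := h'
  refine ⟨add_pos ha ha', hb, fun x y => ?_⟩
  have t1 := ht x y
  have t2 := ht' (x + a) y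
  have hd : Disjoint (interior (Set.Icc x (x + a) ×ˢ Set.Icc y (y + b)))
      (interior (Set.Icc (x + a) (x + a + a') ×ˢ Set.Icc y (y + b))) := by
    rw [interior_prod_eq, interior_prod_eq, interior_Icc, interior_Icc, interior_Icc]
    rw [Set.disjoint_left]
    rintro ⟨px, py⟩ hp hq
    exact absurd (lt_trans hp.1.2 hq.1.1) (lt_irrefl px)
  have := Til.union t1 t2 hd
  have e : (Set.Icc x (x + a) ×ˢ Set.Icc y (y + b)) ∪
      (Set.Icc (x + a) (x + a + a') ×ˢ Set.Icc y (y + b)) =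
      Set.Icc x (x + (a + a')) ×ˢ Set.Icc y (y + b) := by
    rw [← Set.union_prod, Set.Icc_union_Icc_eq_Icc (by linarith) (by linarith), add_assoc]
  rwa [e] at this

lemma Tileable.single {c a b : ℝ} (ha : 0 < a) (hb : 0 < b)
    (hr : a / b = c ∨ a / b = c⁻¹) : Tileable c a b := by
  refine ⟨ha, hb, fun x y => ?_⟩
  refine ⟨1, fun _ => x, fun _ => x + a, fun _ => y, fun _ => y + b, ?_, ?_, ?_, ?_⟩
  · intro _
    exact ⟨lt_add_of_pos_right x ha, lt_add_of_pos_right y hb⟩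
  · intro _; simpa using hr
  · intro j k hjk; exact absurd (Subsingleton.elim j k) hjk
  · ext p; simp

lemma Tileable.nrep {c a b : ℝ} (h : Tileable c a b) :
    ∀ n : ℕ, 0 < n → Tileable c (n * a) b := by
  intro n
  induction n with
  | zero => intro hn; exact absurd hn (lt_irrefl 0)
  | succ n ih =>
    intro _
    rcases Nat.eq_zero_or_pos n with h0 | h0
    · subst h0; simpa using h
    · have : ((n + 1 : ℕ) : ℝ) * a = (n : ℕ) * a + a := by push_cast; ring
      rw [this]
      exact (ih h0).hcat h

lemma tile_rat {c : ℝ} (hc : 0 < c) (q : ℚ) (hq : 0 < q) : Tileable c ((q : ℝ) * c) 1 := by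
  set p := q.num.toNat with hp_def
  set n := q.den with hn_def
  have hnum0 : 0 < q.num := Rat.num_pos.mpr hq
  have hp : 0 < p := by rw [hp_def]; omega
  have hn : 0 < n := q.den_pos
  have hnR : (0 : ℝ) < (n : ℝ) := by exact_mod_cast hn
  have base : Tileable c (c / n) (1 / n) := by
    refine Tileable.single (by positivity) (by positivity) (Or.inl ?_)
    field_simp
  have h1 : Tileable c ((p : ℝ) * (c / n)) (1 / n) := base.nrep p hp
  have h2 : Tileable c ((n : ℝ) * (1 / n)) ((p : ℝ) * (c / n)) := h1.transpose.nrep n hn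
  have h3 : Tileable c ((p : ℝ) * (c / n)) ((n : ℝ) * (1 / n)) := h2.transpose
  have e1 : (q : ℝ) * c = (p : ℝ) * (c / n) := by
    have hnum : ((p : ℕ) : ℝ) = (q.num : ℝ) := by
      rw [hp_def]; exact_mod_cast Int.toNat_of_nonneg hnum0.le
    rw [Rat.cast_def, ← hnum, ← hn_def]
    ring
  have e2 : (n : ℝ) * (1 / n) = 1 := by field_simp
  rw [e1, ← e2]
  exact h3

lemma contFracR_pos {c : ℝ} (hc : 0 < c) :
    ∀ d : List ℝ, d ≠ [] → (∀ a ∈ d, 0 < a) → 0 < contFracR d c := by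
  intro d
  induction d with
  | nil => intro h; exact absurd rfl h
  | cons d₁ tail ih =>
    intro _ hpos
    cases tail with
    | nil => simpa [contFracR] using mul_pos (hpos d₁ (List.mem_cons_self)) hc
    | cons e rest =>
      have h1 : 0 < d₁ * c := mul_pos (hpos d₁ (List.mem_cons_self)) hc
      have h2 : 0 < contFracR (e :: rest) c :=
        ih (by simp) (fun a ha => hpos a (List.mem_cons_of_mem _ ha))
      simp only [contFracR]
      positivity

lemma key_tileable {c : ℝ} (hc : 0 < c) :
    ∀ d : List ℚ, d ≠ [] → (∀ a ∈ d, 0 < a) →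
      Tileable c (contFracR (d.map fun a => (a : ℝ)) c) 1 := by
  intro d
  induction d with
  | nil => intro h; exact absurd rfl h
  | cons d₁ tail ih =>
    intro _ hpos
    cases tail with
    | nil =>
      simpa [contFracR] using tile_rat hc d₁ (hpos d₁ (List.mem_cons_self))
    | cons e rest =>
      have hs : Tileable c (contFracR ((e :: rest).map fun a => (a : ℝ)) c) 1 :=
        ih (by simp) (fun a ha => hpos a (List.mem_cons_of_mem _ ha))
      set s := contFracR ((e :: rest).map fun a => (a : ℝ)) c with hs_def
      have hspos : 0 < s := hs.1
      have hinv : Tileable c s⁻¹ 1 := by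
        have := hs.transpose.scale (k := s⁻¹) (inv_pos.mpr hspos)
        rwa [mul_one, inv_mul_cancel₀ hspos.ne'] at this
      have h1 : Tileable c ((d₁ : ℝ) * c) 1 := tile_rat hc d₁ (hpos d₁ (List.mem_cons_self))
      have h2 := h1.hcat hinv
      exact h2

/-- If `c > 0` and there are positive rationals `d₁, …, d_m` with
`d₁c + 1/(d₂c + 1/(⋯ + 1/(d_m c))) = 1`, then the unit square can be tiled by
finitely many axis-parallel rectangles, each of ratio (horizontal over vertical
side) `c` or `1/c`: their interiors are pairwise disjoint and the union of the
closed rectangles is the closed unit square. -/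
theorem stmt_6 (c : ℝ) (hc : 0 < c) (d : List ℚ) (hne : d ≠ [])
    (hpos : ∀ a ∈ d, 0 < a)
    (hcf : contFracR (d.map fun a => (a : ℝ)) c = 1) :
    ∃ (N : ℕ) (x₁ x₂ y₁ y₂ : Fin N → ℝ),
      (∀ j, x₁ j < x₂ j ∧ y₁ j < y₂ j) ∧
      (∀ j, (x₂ j - x₁ j) / (y₂ j - y₁ j) = c ∨ (x₂ j - x₁ j) / (y₂ j - y₁ j) = c⁻¹) ∧
      (∀ j k, j ≠ k →
        (Set.Ioo (x₁ j) (x₂ j) ×ˢ Set.Ioo (y₁ j) (y₂ j)) ∩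
          (Set.Ioo (x₁ k) (x₂ k) ×ˢ Set.Ioo (y₁ k) (y₂ k)) = ∅) ∧
      (⋃ j, Set.Icc (x₁ j) (x₂ j) ×ˢ Set.Icc (y₁ j) (y₂ j)) =
        Set.Icc (0 : ℝ) 1 ×ˢ Set.Icc (0 : ℝ) 1 := by
  have h := key_tileable hc d hne hpos
  rw [hcf] at h
  have := h.2.2 0 0
  rw [zero_add] at this
  exact this
end

section
/- Suppose c > 0 is such that a square can be tiled by rectangles of ratios c and 1/c. Then c is an algebraic number and every algebraic conjugate of c (every complex root of the minimal polynomial of c over ℚ) has positive real part. -/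
open Finset

/-- The smallest element of `S` strictly greater than `s` (junk value `0` if none). -/
noncomputable def nxt (S : Finset ℝ) (s : ℝ) : ℝ :=
  if h : (S.filter (fun u => s < u)).Nonempty then (S.filter (fun u => s < u)).min' h else 0

lemma nxt_spec {S : Finset ℝ} {s : ℝ} (h : (S.filter (fun u => s < u)).Nonempty) :
    nxt S s ∈ S ∧ s < nxt S s ∧ ∀ u ∈ S, s < u → nxt S s ≤ u := by
  rw [nxt, dif_pos h]
  have h1 := Finset.min'_mem _ h
  rw [Finset.mem_filter] at h1
  exact ⟨h1.1, h1.2, fun u hu hsu => Finset.min'_le _ _ (Finset.mem_filter.mpr ⟨hu, hsu⟩)⟩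

lemma tele (f : ℝ → ℂ) (S : Finset ℝ) :
    ∀ (n : ℕ) (a b : ℝ), a ∈ S → b ∈ S → a ≤ b →
      (S.filter (fun s => a ≤ s ∧ s < b)).card = n →
      ∑ s ∈ S.filter (fun s => a ≤ s ∧ s < b), (f (nxt S s) - f s) = f b - f a := by
  intro n
  induction n using Nat.strong_induction_on with
  | _ n ih =>
    intro a b ha hb hab hcard
    rcases eq_or_lt_of_le hab with rfl | hlt
    · have he : S.filter (fun s => a ≤ s ∧ s < a) = ∅ := by
        apply Finset.filter_false_of_mem
        rintro s _ ⟨h1, h2⟩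
        exact absurd (lt_of_le_of_lt h1 h2) (lt_irrefl a)
      simp [he]
    · have hne : (S.filter (fun u => a < u)).Nonempty := ⟨b, Finset.mem_filter.mpr ⟨hb, hlt⟩⟩
      obtain ⟨ha'S, haa', hmin⟩ := nxt_spec hne
      have ha'b : nxt S a ≤ b := hmin b hb hlt
      have hnotmem : a ∉ S.filter (fun s => nxt S a ≤ s ∧ s < b) := by
        simp only [Finset.mem_filter, not_and]
        intro _ h
        exact absurd (lt_of_lt_of_le haa' h) (lt_irrefl a)
      have hsplit : S.filter (fun s => a ≤ s ∧ s < b)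
          = insert a (S.filter (fun s => nxt S a ≤ s ∧ s < b)) := by
        ext s
        simp only [Finset.mem_insert, Finset.mem_filter]
        constructor
        · rintro ⟨hs, h1, h2⟩
          rcases eq_or_lt_of_le h1 with rfl | h1'
          · exact Or.inl rfl
          · exact Or.inr ⟨hs, hmin s hs h1', h2⟩
        · rintro (rfl | ⟨hs, h1, h2⟩)
          · exact ⟨ha, le_refl _, hlt⟩
          · exact ⟨hs, le_trans (le_of_lt haa') h1, h2⟩
      have hcard' : (S.filter (fun s => nxt S a ≤ s ∧ s < b)).card + 1 = n := by
        rw [← hcard, hsplit, Finset.card_insert_of_notMem hnotmem]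
      have hrec := ih _ (by omega) (nxt S a) b ha'S hb ha'b rfl
      rw [hsplit, Finset.sum_insert hnotmem, hrec]
      ring

lemma key_sum {N : ℕ} (x₁ x₂ y₁ y₂ : Fin N → ℝ)
    (hlt : ∀ j, x₁ j < x₂ j ∧ y₁ j < y₂ j)
    (hdisj : ∀ j k, j ≠ k →
      (Set.Ioo (x₁ j) (x₂ j) ×ˢ Set.Ioo (y₁ j) (y₂ j)) ∩
        (Set.Ioo (x₁ k) (x₂ k) ×ˢ Set.Ioo (y₁ k) (y₂ k)) = ∅)
    (hcover : (⋃ j, Set.Icc (x₁ j) (x₂ j) ×ˢ Set.Icc (y₁ j) (y₂ j)) =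
        Set.Icc (0 : ℝ) 1 ×ˢ Set.Icc (0 : ℝ) 1)
    (f g : ℝ → ℂ) :
    ∑ j, (f (x₂ j) - f (x₁ j)) * (g (y₂ j) - g (y₁ j)) = (f 1 - f 0) * (g 1 - g 0) := by
  classical
  -- tiles are inside the unit square
  have hsub : ∀ j, Set.Icc (x₁ j) (x₂ j) ×ˢ Set.Icc (y₁ j) (y₂ j) ⊆
      Set.Icc (0 : ℝ) 1 ×ˢ Set.Icc (0 : ℝ) 1 := by
    intro j
    rw [← hcover]
    exact Set.subset_iUnion (fun j => Set.Icc (x₁ j) (x₂ j) ×ˢ Set.Icc (y₁ j) (y₂ j)) j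
  have hb : ∀ j, (0 ≤ x₁ j ∧ x₂ j ≤ 1) ∧ (0 ≤ y₁ j ∧ y₂ j ≤ 1) := by
    intro j
    have h1 := hsub j (Set.mk_mem_prod
      (Set.mem_Icc.mpr ⟨le_refl _, le_of_lt (hlt j).1⟩)
      (Set.mem_Icc.mpr ⟨le_refl _, le_of_lt (hlt j).2⟩))
    have h2 := hsub j (Set.mk_mem_prod
      (Set.mem_Icc.mpr ⟨le_of_lt (hlt j).1, le_refl _⟩)
      (Set.mem_Icc.mpr ⟨le_of_lt (hlt j).2, le_refl _⟩))
    exact ⟨⟨h1.1.1, h2.1.2⟩, ⟨h1.2.1, h2.2.2⟩⟩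
  -- existence: each point of [0,1)² is in exactly one half-open tile
  have hexist : ∀ s t : ℝ, 0 ≤ s → s < 1 → 0 ≤ t → t < 1 →
      ∃ j, (x₁ j ≤ s ∧ s < x₂ j) ∧ (y₁ j ≤ t ∧ t < y₂ j) := by
    intro s t hs0 hs1 ht0 ht1
    set m := min (1 - s) (1 - t) with hm
    have hmpos : 0 < m := lt_min (by linarith) (by linarith)
    set δ : ℕ → ℝ := fun n => m / (n + 2) with hδ
    have hδpos : ∀ n, 0 < δ n := fun n => div_pos hmpos (by positivity)
    have hδle : ∀ n, δ n ≤ m := by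
      intro n
      rw [hδ]
      rw [div_le_iff₀ (by positivity : (0:ℝ) < (n:ℝ) + 2)]
      nlinarith [hmpos, (Nat.cast_nonneg n : (0:ℝ) ≤ n)]
    have hδanti : ∀ m' n : ℕ, m' ≤ n → δ n ≤ δ m' := by
      intro m' n h
      apply div_le_div_of_nonneg_left (le_of_lt hmpos) (by positivity)
      have : (m' : ℝ) ≤ n := Nat.cast_le.mpr h
      linarith
    have hp : ∀ n : ℕ, ((s + δ n, t + δ n) : ℝ × ℝ) ∈
        Set.Icc (0:ℝ) 1 ×ˢ Set.Icc (0:ℝ) 1 := by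
      intro n
      have h1 : δ n ≤ 1 - s := le_trans (hδle n) (min_le_left _ _)
      have h2 : δ n ≤ 1 - t := le_trans (hδle n) (min_le_right _ _)
      have := hδpos n
      exact Set.mk_mem_prod (Set.mem_Icc.mpr ⟨by linarith, by linarith⟩)
        (Set.mem_Icc.mpr ⟨by linarith, by linarith⟩)
    have hmem : ∀ n : ℕ, ∃ j, ((s + δ n, t + δ n) : ℝ × ℝ) ∈
        Set.Icc (x₁ j) (x₂ j) ×ˢ Set.Icc (y₁ j) (y₂ j) := by
      intro n
      have := hp n
      rw [← hcover] at this
      exact Set.mem_iUnion.mp this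
    choose jf hjf using hmem
    have hNpos : ∃ j, ∀ M : ℕ, ∃ n, M ≤ n ∧ jf n = j := by
      by_contra hcon
      push_neg at hcon
      choose Mf hMf using hcon
      have : (Finset.univ : Finset (Fin N)).Nonempty := ⟨jf 0, Finset.mem_univ _⟩
      set M := Finset.univ.sup Mf with hM
      exact hMf (jf M) M (Finset.le_sup (Finset.mem_univ _)) rfl
    obtain ⟨j, hj⟩ := hNpos
    refine ⟨j, ⟨?_, ?_⟩, ⟨?_, ?_⟩⟩
    · -- x₁ j ≤ s
      apply le_of_forall_pos_le_add
      intro ε hε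
      obtain ⟨n₀, hn₀⟩ := exists_nat_gt (m / ε)
      obtain ⟨n, hn, hjn⟩ := hj n₀
      have h1 : δ n < ε := by
        have h2 : δ n ≤ δ n₀ := hδanti n₀ n hn
        have h3 : δ n₀ < ε := by
          rw [hδ, div_lt_iff₀ (by positivity : (0:ℝ) < (n₀:ℝ) + 2)]
          have := (div_lt_iff₀ hε).mp hn₀
          nlinarith [hε]
        linarith
      have := (hjf n).1.1
      rw [hjn] at this
      simp only at this
      linarith
    · -- s < x₂ j
      obtain ⟨n, _, hjn⟩ := hj 0
      have := (hjf n).1.2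
      rw [hjn] at this
      simp only at this
      have := hδpos n
      linarith
    · -- y₁ j ≤ t
      apply le_of_forall_pos_le_add
      intro ε hε
      obtain ⟨n₀, hn₀⟩ := exists_nat_gt (m / ε)
      obtain ⟨n, hn, hjn⟩ := hj n₀
      have h1 : δ n < ε := by
        have h2 : δ n ≤ δ n₀ := hδanti n₀ n hn
        have h3 : δ n₀ < ε := by
          rw [hδ, div_lt_iff₀ (by positivity : (0:ℝ) < (n₀:ℝ) + 2)]
          have := (div_lt_iff₀ hε).mp hn₀
          nlinarith [hε]
        linarith
      have := (hjf n).2.1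
      rw [hjn] at this
      simp only at this
      linarith
    · obtain ⟨n, _, hjn⟩ := hj 0
      have := (hjf n).2.2
      rw [hjn] at this
      simp only at this
      have := hδpos n
      linarith
  -- uniqueness
  have huniq : ∀ (j k : Fin N) (s t : ℝ), (x₁ j ≤ s ∧ s < x₂ j) → (y₁ j ≤ t ∧ t < y₂ j) →
      (x₁ k ≤ s ∧ s < x₂ k) → (y₁ k ≤ t ∧ t < y₂ k) → j = k := by
    intro j k s t h1 h2 h3 h4
    by_contra hjk
    set ε := min (min (x₂ j - s) (x₂ k - s)) (min (y₂ j - t) (y₂ k - t)) with hε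
    have hεpos : 0 < ε := by
      apply lt_min <;> apply lt_min <;> linarith [h1.2, h2.2, h3.2, h4.2]
    have hεx₁ : ε ≤ x₂ j - s := le_trans (min_le_left _ _) (min_le_left _ _)
    have hεx₂ : ε ≤ x₂ k - s := le_trans (min_le_left _ _) (min_le_right _ _)
    have hεy₁ : ε ≤ y₂ j - t := le_trans (min_le_right _ _) (min_le_left _ _)
    have hεy₂ : ε ≤ y₂ k - t := le_trans (min_le_right _ _) (min_le_right _ _)
    have hq : ((s + ε/2, t + ε/2) : ℝ × ℝ) ∈
        (Set.Ioo (x₁ j) (x₂ j) ×ˢ Set.Ioo (y₁ j) (y₂ j)) ∩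
          (Set.Ioo (x₁ k) (x₂ k) ×ˢ Set.Ioo (y₁ k) (y₂ k)) := by
      constructor
      · exact ⟨Set.mem_Ioo.mpr ⟨by linarith [h1.1], by linarith⟩,
          Set.mem_Ioo.mpr ⟨by linarith [h2.1], by linarith⟩⟩
      · exact ⟨Set.mem_Ioo.mpr ⟨by linarith [h3.1], by linarith⟩,
          Set.mem_Ioo.mpr ⟨by linarith [h4.1], by linarith⟩⟩
    rw [hdisj j k hjk] at hq
    exact hq
  -- the grid coordinate finsets
  set S : Finset ℝ :=
    insert 0 (insert 1 ((Finset.univ.image x₁) ∪ (Finset.univ.image x₂))) with hS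
  set T : Finset ℝ :=
    insert 0 (insert 1 ((Finset.univ.image y₁) ∪ (Finset.univ.image y₂))) with hT
  have h0S : (0:ℝ) ∈ S := Finset.mem_insert_self _ _
  have h1S : (1:ℝ) ∈ S := Finset.mem_insert_of_mem (Finset.mem_insert_self _ _)
  have h0T : (0:ℝ) ∈ T := Finset.mem_insert_self _ _
  have h1T : (1:ℝ) ∈ T := Finset.mem_insert_of_mem (Finset.mem_insert_self _ _)
  have hx₁S : ∀ j, x₁ j ∈ S := fun j => Finset.mem_insert_of_mem (Finset.mem_insert_of_mem
    (Finset.mem_union_left _ (Finset.mem_image_of_mem _ (Finset.mem_univ j))))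
  have hx₂S : ∀ j, x₂ j ∈ S := fun j => Finset.mem_insert_of_mem (Finset.mem_insert_of_mem
    (Finset.mem_union_right _ (Finset.mem_image_of_mem _ (Finset.mem_univ j))))
  have hy₁T : ∀ j, y₁ j ∈ T := fun j => Finset.mem_insert_of_mem (Finset.mem_insert_of_mem
    (Finset.mem_union_left _ (Finset.mem_image_of_mem _ (Finset.mem_univ j))))
  have hy₂T : ∀ j, y₂ j ∈ T := fun j => Finset.mem_insert_of_mem (Finset.mem_insert_of_mem
    (Finset.mem_union_right _ (Finset.mem_image_of_mem _ (Finset.mem_univ j))))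
  -- the half-open grid cells belonging to each tile, and the square
  set Q : Fin N → Finset (ℝ × ℝ) := fun j =>
    (S ×ˢ T).filter (fun p => (x₁ j ≤ p.1 ∧ p.1 < x₂ j) ∧ (y₁ j ≤ p.2 ∧ p.2 < y₂ j)) with hQ
  set P : Finset (ℝ × ℝ) :=
    (S ×ˢ T).filter (fun p => (0 ≤ p.1 ∧ p.1 < 1) ∧ (0 ≤ p.2 ∧ p.2 < 1)) with hP
  have hfp : ∀ a b a' b' : ℝ,
      (S.filter (fun s => a ≤ s ∧ s < b)) ×ˢ (T.filter (fun t => a' ≤ t ∧ t < b'))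
        = (S ×ˢ T).filter (fun z => (a ≤ z.1 ∧ z.1 < b) ∧ (a' ≤ z.2 ∧ z.2 < b')) := by
    intro a b a' b'
    ext z
    simp only [Finset.mem_product, Finset.mem_filter]
    tauto
  -- per-tile product expansion
  have hterm : ∀ j, (f (x₂ j) - f (x₁ j)) * (g (y₂ j) - g (y₁ j)) =
      ∑ p ∈ Q j, (f (nxt S p.1) - f p.1) * (g (nxt T p.2) - g p.2) := by
    intro j
    rw [← tele f S _ (x₁ j) (x₂ j) (hx₁S j) (hx₂S j) (le_of_lt (hlt j).1) rfl,
      ← tele g T _ (y₁ j) (y₂ j) (hy₁T j) (hy₂T j) (le_of_lt (hlt j).2) rfl,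
      Finset.sum_mul_sum]
    rw [show Q j = (S.filter (fun s => x₁ j ≤ s ∧ s < x₂ j)) ×ˢ
        (T.filter (fun t => y₁ j ≤ t ∧ t < y₂ j)) from (hfp _ _ _ _).symm,
      Finset.sum_product]
  have hPterm : (f 1 - f 0) * (g 1 - g 0) =
      ∑ p ∈ P, (f (nxt S p.1) - f p.1) * (g (nxt T p.2) - g p.2) := by
    rw [← tele f S _ 0 1 h0S h1S zero_le_one rfl,
      ← tele g T _ 0 1 h0T h1T zero_le_one rfl, Finset.sum_mul_sum]
    rw [show P = (S.filter (fun s => (0:ℝ) ≤ s ∧ s < 1)) ×ˢ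
        (T.filter (fun t => (0:ℝ) ≤ t ∧ t < 1)) from (hfp _ _ _ _).symm,
      Finset.sum_product]
  -- the Q j partition P
  have hdisjQ : (↑(Finset.univ : Finset (Fin N)) : Set (Fin N)).PairwiseDisjoint Q := by
    intro j _ k _ hjk
    refine Finset.disjoint_left.mpr ?_
    intro p hpj hpk
    simp only [hQ, Finset.mem_filter] at hpj hpk
    exact hjk (huniq j k p.1 p.2 hpj.2.1 hpj.2.2 hpk.2.1 hpk.2.2)
  have hbiun : Finset.univ.biUnion Q = P := by
    ext p
    simp only [Finset.mem_biUnion, Finset.mem_univ, true_and, hQ, hP, Finset.mem_filter]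
    constructor
    · rintro ⟨j, hpST, ⟨hx1, hx2⟩, ⟨hy1, hy2⟩⟩
      obtain ⟨⟨hbx1, hbx2⟩, ⟨hby1, hby2⟩⟩ := hb j
      exact ⟨hpST, ⟨le_trans hbx1 hx1, lt_of_lt_of_le hx2 hbx2⟩,
        ⟨le_trans hby1 hy1, lt_of_lt_of_le hy2 hby2⟩⟩
    · rintro ⟨hpST, ⟨hs0, hs1⟩, ⟨ht0, ht1⟩⟩
      obtain ⟨j, hj1, hj2⟩ := hexist p.1 p.2 hs0 hs1 ht0 ht1
      exact ⟨j, hpST, hj1, hj2⟩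
  calc ∑ j, (f (x₂ j) - f (x₁ j)) * (g (y₂ j) - g (y₁ j))
      = ∑ j, ∑ p ∈ Q j, (f (nxt S p.1) - f p.1) * (g (nxt T p.2) - g p.2) := by
        exact Finset.sum_congr rfl (fun j _ => hterm j)
    _ = ∑ p ∈ Finset.univ.biUnion Q, (f (nxt S p.1) - f p.1) * (g (nxt T p.2) - g p.2) :=
        (Finset.sum_biUnion hdisjQ).symm
    _ = ∑ p ∈ P, (f (nxt S p.1) - f p.1) * (g (nxt T p.2) - g p.2) := by rw [hbiun]
    _ = (f 1 - f 0) * (g 1 - g 0) := hPterm.symm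

lemma core (c : ℝ) (hc : 0 < c)
    {N : ℕ} (x₁ x₂ y₁ y₂ : Fin N → ℝ)
    (hlt : ∀ j, x₁ j < x₂ j ∧ y₁ j < y₂ j)
    (hratio : ∀ j, (x₂ j - x₁ j) / (y₂ j - y₁ j) = c ∨ (x₂ j - x₁ j) / (y₂ j - y₁ j) = c⁻¹)
    (hdisj : ∀ j k, j ≠ k →
      (Set.Ioo (x₁ j) (x₂ j) ×ˢ Set.Ioo (y₁ j) (y₂ j)) ∩
        (Set.Ioo (x₁ k) (x₂ k) ×ˢ Set.Ioo (y₁ k) (y₂ k)) = ∅)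
    (hcover : (⋃ j, Set.Icc (x₁ j) (x₂ j) ×ˢ Set.Icc (y₁ j) (y₂ j)) =
        Set.Icc (0 : ℝ) 1 ×ˢ Set.Icc (0 : ℝ) 1)
    {F : Type} [Field F] (e : F →+* ℝ) (e' : F →+* ℂ) (a : F) (hea : e a = c) :
    0 < (e' a).re := by
  classical
  letI : Module F ℝ := Module.compHom ℝ e
  have hsmul : ∀ (q : F) (x : ℝ), q • x = e q * x := fun q x => rfl
  have h1 : LinearIndepOn F id ({(1:ℝ)} : Set ℝ) :=
    (linearIndepOn_singleton_iff F).mpr one_ne_zero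
  set B := Module.Basis.extend h1 with hB
  have h1mem : (1:ℝ) ∈ h1.extend (Set.subset_univ _) :=
    h1.subset_extend _ (Set.mem_singleton _)
  set i₀ : ↥(h1.extend (Set.subset_univ _)) := ⟨1, h1mem⟩ with hi₀
  set f : ℝ → ℂ := fun x => e' ((B.repr x) i₀) with hf
  have hfadd : ∀ x y : ℝ, f (x - y) = f x - f y := by
    intro x y
    rw [hf]
    simp only [map_sub, Finsupp.sub_apply]
  have hfs : ∀ (q : F) (x : ℝ), f (e q * x) = e' q * f x := by
    intro q x
    rw [hf]
    simp only [← hsmul, map_smul, Finsupp.smul_apply, smul_eq_mul, map_mul]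
  have hf1 : f 1 = 1 := by
    have h2 : B.repr (B i₀) i₀ = 1 := by rw [Module.Basis.repr_self]; exact Finsupp.single_eq_same
    rw [Module.Basis.extend_apply_self h1 i₀] at h2
    rw [hf]
    show e' (B.repr 1 i₀) = 1
    rw [h2, map_one]
  have hf0 : f 0 = 0 := by
    rw [hf]
    simp only [map_zero, Finsupp.coe_zero, Pi.zero_apply]
  -- the conjugate-area sum
  have hsum : ∑ j, (f (x₂ j) - f (x₁ j)) *
      ((starRingEnd ℂ) (f (y₂ j)) - (starRingEnd ℂ) (f (y₁ j))) = 1 := by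
    have h := key_sum x₁ x₂ y₁ y₂ hlt hdisj hcover f (fun x => (starRingEnd ℂ) (f x))
    simp only [hf1, hf0, map_one, map_zero, sub_zero, mul_one] at h
    exact h
  have hterm : ∀ j, ∃ n : ℝ, 0 ≤ n ∧ ((f (x₂ j) - f (x₁ j)) *
      ((starRingEnd ℂ) (f (y₂ j)) - (starRingEnd ℂ) (f (y₁ j)))).re = (e' a).re * n := by
    intro j
    have hxy := hlt j
    have hy : y₂ j - y₁ j ≠ 0 := ne_of_gt (by linarith [hxy.2])
    have hfx : f (x₂ j) - f (x₁ j) = f (x₂ j - x₁ j) := (hfadd _ _).symm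
    have hfy : (starRingEnd ℂ) (f (y₂ j)) - (starRingEnd ℂ) (f (y₁ j))
        = (starRingEnd ℂ) (f (y₂ j - y₁ j)) := by rw [← map_sub, hfadd]
    rcases hratio j with hr | hr
    · have hw : x₂ j - x₁ j = e a * (y₂ j - y₁ j) := by
        rw [hea]; exact (div_eq_iff hy).mp hr
      refine ⟨Complex.normSq (f (y₂ j - y₁ j)), Complex.normSq_nonneg _, ?_⟩
      rw [hfx, hfy, hw, hfs]
      have h2 : (e' a * f (y₂ j - y₁ j)) * (starRingEnd ℂ) (f (y₂ j - y₁ j))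
          = e' a * ((Complex.normSq (f (y₂ j - y₁ j)) : ℝ) : ℂ) := by
        rw [mul_assoc, Complex.mul_conj]
      rw [h2, Complex.mul_re]
      simp
    · have hc' : c ≠ 0 := ne_of_gt hc
      have hw : y₂ j - y₁ j = e a * (x₂ j - x₁ j) := by
        rw [hea]
        have hx : x₂ j - x₁ j = c⁻¹ * (y₂ j - y₁ j) := (div_eq_iff hy).mp hr
        field_simp at hx
        linarith
      refine ⟨Complex.normSq (f (x₂ j - x₁ j)), Complex.normSq_nonneg _, ?_⟩
      rw [hfx, hfy, hw, hfs, map_mul]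
      have h2 : f (x₂ j - x₁ j) * ((starRingEnd ℂ) (e' a) * (starRingEnd ℂ) (f (x₂ j - x₁ j)))
          = (starRingEnd ℂ) (e' a) * ((Complex.normSq (f (x₂ j - x₁ j)) : ℝ) : ℂ) := by
        rw [← mul_assoc, mul_comm (f _) _, mul_assoc, Complex.mul_conj]
      rw [h2, Complex.mul_re]
      simp
  choose n hn using hterm
  have key : (e' a).re * ∑ j, n j = 1 := by
    calc (e' a).re * ∑ j, n j = ∑ j, (e' a).re * n j := Finset.mul_sum _ _ _
      _ = ∑ j, ((f (x₂ j) - f (x₁ j)) *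
          ((starRingEnd ℂ) (f (y₂ j)) - (starRingEnd ℂ) (f (y₁ j)))).re :=
        Finset.sum_congr rfl (fun j _ => ((hn j).2).symm)
      _ = (∑ j, (f (x₂ j) - f (x₁ j)) *
          ((starRingEnd ℂ) (f (y₂ j)) - (starRingEnd ℂ) (f (y₁ j)))).re :=
        (Complex.re_sum _ _).symm
      _ = 1 := by rw [hsum]; exact Complex.one_re
  have hnn : 0 ≤ ∑ j, n j := Finset.sum_nonneg (fun j _ => (hn j).1)
  nlinarith [key, hnn]

/-- If `c > 0` and some square (here the unit square) can be tiled by finitely many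
axis-parallel rectangles of ratios `c` and `1/c` (pairwise disjoint interiors, union
equal to the square), then `c` is algebraic over `ℚ` and every algebraic conjugate
of `c`, i.e. every complex root of its minimal polynomial over `ℚ`, has positive
real part. -/
theorem stmt_7 (c : ℝ) (hc : 0 < c)
    (htiling : ∃ (N : ℕ) (x₁ x₂ y₁ y₂ : Fin N → ℝ),
      (∀ j, x₁ j < x₂ j ∧ y₁ j < y₂ j) ∧
      (∀ j, (x₂ j - x₁ j) / (y₂ j - y₁ j) = c ∨ (x₂ j - x₁ j) / (y₂ j - y₁ j) = c⁻¹) ∧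
      (∀ j k, j ≠ k →
        (Set.Ioo (x₁ j) (x₂ j) ×ˢ Set.Ioo (y₁ j) (y₂ j)) ∩
          (Set.Ioo (x₁ k) (x₂ k) ×ˢ Set.Ioo (y₁ k) (y₂ k)) = ∅) ∧
      (⋃ j, Set.Icc (x₁ j) (x₂ j) ×ˢ Set.Icc (y₁ j) (y₂ j)) =
        Set.Icc (0 : ℝ) 1 ×ˢ Set.Icc (0 : ℝ) 1) :
    IsAlgebraic ℚ c ∧
      ∀ z : ℂ, Polynomial.aeval z (minpoly ℚ (c : ℂ)) = 0 → 0 < z.re := by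
  obtain ⟨N, x₁, x₂, y₁, y₂, hlt, hratio, hdisj, hcover⟩ := htiling
  have halg : IsAlgebraic ℚ c := by
    by_contra htr
    have htr' : Transcendental ℚ c := htr
    have htrneg : Transcendental ℚ (-c) := by
      intro h
      apply htr
      obtain ⟨p, hp0, hpe⟩ := h
      refine ⟨p.comp (-Polynomial.X), ?_, ?_⟩
      · intro h0
        apply hp0
        have h3 := congrArg (fun q => Polynomial.comp q (-Polynomial.X)) h0
        simpa [Polynomial.comp_assoc, Polynomial.neg_comp, Polynomial.X_comp,
          Polynomial.comp_X] using h3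
      · rw [Polynomial.aeval_comp]
        simpa using hpe
    have hinj : Function.Injective ((Polynomial.aeval c : Polynomial ℚ →ₐ[ℚ] ℝ) : Polynomial ℚ →+* ℝ) :=
      transcendental_iff_injective.mp htr'
    have hinj' : Function.Injective
        ((Polynomial.aeval (-c) : Polynomial ℚ →ₐ[ℚ] ℝ) : Polynomial ℚ →+* ℝ) :=
      transcendental_iff_injective.mp htrneg
    set F := FractionRing (Polynomial ℚ) with hF
    set e : F →+* ℝ := IsFractionRing.lift (K := F) hinj with he
    set e' : F →+* ℂ := (Complex.ofRealHom.comp (IsFractionRing.lift (K := F) hinj')) with he'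
    set a : F := algebraMap (Polynomial ℚ) F Polynomial.X with ha
    have hea : e a = c := by
      rw [he, ha, IsFractionRing.lift_algebraMap]
      simp
    have := core c hc x₁ x₂ y₁ y₂ hlt hratio hdisj hcover e e' a hea
    have he'a : e' a = ((-c : ℝ) : ℂ) := by
      rw [he', ha, RingHom.comp_apply, IsFractionRing.lift_algebraMap]
      simp
    rw [he'a] at this
    simp only [Complex.ofReal_re] at this
    linarith
  refine ⟨halg, ?_⟩
  intro z hz
  have hci : IsIntegral ℚ c := halg.isIntegral
  haveI : Fact (Irreducible (minpoly ℚ c)) := ⟨minpoly.irreducible hci⟩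
  have hmin : minpoly ℚ ((c : ℝ) : ℂ) = minpoly ℚ c :=
    minpoly.algebraMap_eq (algebraMap ℝ ℂ).injective c
  rw [hmin] at hz
  set F := AdjoinRoot (minpoly ℚ c) with hF
  set e : F →+* ℝ := AdjoinRoot.lift (algebraMap ℚ ℝ) c
    (by rw [← Polynomial.aeval_def]; exact minpoly.aeval ℚ c) with he
  set e' : F →+* ℂ := AdjoinRoot.lift (algebraMap ℚ ℂ) z
    (by rw [← Polynomial.aeval_def]; exact hz) with he'
  have hea : e (AdjoinRoot.root _) = c := AdjoinRoot.lift_root _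
  have := core c hc x₁ x₂ y₁ y₂ hlt hratio hdisj hcover e e' (AdjoinRoot.root _) hea
  rwa [AdjoinRoot.lift_root] at this
end

section
/- Let c > 0 be algebraic such that every algebraic conjugate of c has positive real part. Let p be the minimal polynomial of c over ℚ and set C(z) = (p(−z) − p(z))/(p(−z) + p(z)). Then C is an odd rational function with rational coefficients, C(c) = 1, and every complex root of C(z) = 1 has positive real part. -/
open Polynomial

/-- Let `c > 0` be algebraic with all algebraic conjugates of positive real part,
let `p` be its minimal polynomial over `ℚ` and set
`C(z) = (p(−z) − p(z))/(p(−z) + p(z))`.  Then `C` is a rational function with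
rational coefficients, it is odd wherever defined, `C(c) = 1`, and every complex
root of `C(z) = 1` has positive real part. -/
theorem stmt_8 (c : ℝ) (hc : 0 < c) (halg : IsAlgebraic ℚ (c : ℂ))
    (hconj : ∀ z : ℂ, aeval z (minpoly ℚ (c : ℂ)) = 0 → 0 < z.re)
    (C : ℂ → ℂ)
    (hC : ∀ z : ℂ, C z =
      (aeval (-z) (minpoly ℚ (c : ℂ)) - aeval z (minpoly ℚ (c : ℂ))) /
      (aeval (-z) (minpoly ℚ (c : ℂ)) + aeval z (minpoly ℚ (c : ℂ)))) :
    (∃ P Q : Polynomial ℚ, Q ≠ 0 ∧ ∀ z : ℂ, C z = aeval z P / aeval z Q) ∧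
    (∀ z : ℂ, aeval (-z) (minpoly ℚ (c : ℂ)) + aeval z (minpoly ℚ (c : ℂ)) ≠ 0 →
      C (-z) = - C z) ∧
    C (c : ℂ) = 1 ∧
    (∀ z : ℂ, C z = 1 → 0 < z.re) := by
  set p := minpoly ℚ (c : ℂ) with hp
  have hcomp : ∀ z : ℂ, aeval z (p.comp (-X)) = aeval (-z) p := by
    intro z; simp [aeval_comp]
  have hp0 : aeval (0 : ℂ) p ≠ 0 := by
    intro h
    have := hconj 0 h
    simp at this
  refine ⟨⟨p.comp (-X) - p, p.comp (-X) + p, ?_, ?_⟩, ?_, ?_, ?_⟩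
  · intro hQ
    have h0 : aeval (0 : ℂ) (p.comp (-X) + p) = 0 := by rw [hQ]; simp
    rw [map_add, hcomp, neg_zero] at h0
    have := hp0
    simp only [← two_mul] at h0
    rcases mul_eq_zero.1 h0 with h | h
    · norm_num at h
    · exact hp0 h
  · intro z
    rw [hC z, map_sub, map_add, hcomp]
  · intro z hz
    rw [hC z, hC (-z), neg_neg, ← neg_div, neg_sub]
    rw [add_comm]
  · have hpc : aeval ((c : ℝ) : ℂ) p = 0 := minpoly.aeval ℚ _
    have hpnc : aeval (-((c : ℝ) : ℂ)) p ≠ 0 := by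
      intro h
      have := hconj _ h
      simp at this
      linarith
    rw [hC, hpc, sub_zero, add_zero, div_self hpnc]
  · intro z hz
    rw [hC z] at hz
    by_cases hd : aeval (-z) p + aeval z p = 0
    · rw [hd, div_zero] at hz; norm_num at hz
    · have := (div_eq_one_iff_eq hd).1 hz
      have hzero : aeval z p = 0 := by linear_combination (-this)/2
      exact hconj z hzero
end

section
/- Let p ∈ ℚ[z] be the minimal polynomial of a positive real number c², and suppose all roots of p other than c² are negative reals, say p(z²) = (z² − c²)·Π_{k=1}^n (z² + b_k²) with b₁ > ... > b_n > 0. Choose rationals a₁ > b₁ > a₂ > ... > a_n > b_n > 0 and set q(z) = z·Π_{k=1}^n (z² + a_k²), C(z) = q(z)/(z q(z) − p(z²)). Then C(c) = 1/c, C is odd, every zero z₀ of C satisfies Re z₀ = 0, and C'(z₀) > 0 at each zero (including z₀ = 0, where C'(0) = −q'(0)/p(0) > 0). -/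
open Polynomial

private lemma deriv_eq_of_div' {F N D : ℂ → ℂ} {z N' : ℂ} (hF : ∀ w, F w = N w / D w)
    (hN : HasDerivAt N N' z) (hD : DifferentiableAt ℂ D z) (hD0 : D z ≠ 0) (hN0 : N z = 0) :
    deriv F z = N' / D z := by
  rw [show F = fun w => N w / D w from funext hF]
  rw [deriv_fun_div hN.differentiableAt hD hD0, hN.deriv, hN0]
  field_simp
  ring

/-- Let `p ∈ ℚ[z]` be the minimal polynomial of `c² > 0` and suppose all its roots
other than `c²` are negative reals `−bₖ²` with `b₁ > ⋯ > b_n > 0`.  Choose rationals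
`a₁ > b₁ > a₂ > ⋯ > a_n > b_n` and set `q(z) = z ∏ₖ (z² + aₖ²)`,
`C(z) = q(z)/(z q(z) − p(z²))`.  Then `C(c) = 1/c`, `C` is odd (wherever defined),
every zero `z₀` of `C` satisfies `Re z₀ = 0`, and at each zero the derivative
`C'(z₀)` is a positive real number. -/
theorem stmt_10 (c : ℝ) (hc : 0 < c) (n : ℕ) (halg : IsAlgebraic ℚ (c ^ 2))
    (b : Fin n → ℝ) (a : Fin n → ℚ)
    (hbpos : ∀ k : Fin n, 0 < b k)
    (hfact : (minpoly ℚ (c ^ 2)).map (algebraMap ℚ ℝ) =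
      (X - Polynomial.C (c ^ 2)) * ∏ k : Fin n, (X + Polynomial.C ((b k) ^ 2)))
    (hab : ∀ k : Fin n, b k < (a k : ℝ))
    (hba : ∀ (k : ℕ) (h : k + 1 < n),
      ((a ⟨k + 1, h⟩ : ℚ) : ℝ) < b ⟨k, Nat.lt_of_succ_lt h⟩)
    (C : ℂ → ℂ)
    (hC : ∀ z : ℂ, C z =
      (z * ∏ k : Fin n, (z ^ 2 + ((a k : ℚ) : ℂ) ^ 2)) /
      (z * (z * ∏ k : Fin n, (z ^ 2 + ((a k : ℚ) : ℂ) ^ 2)) -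
        aeval (z ^ 2) (minpoly ℚ (c ^ 2)))) :
    C (c : ℂ) = 1 / (c : ℂ) ∧
    (∀ z : ℂ,
      (z * (z * ∏ k : Fin n, (z ^ 2 + ((a k : ℚ) : ℂ) ^ 2)) -
        aeval (z ^ 2) (minpoly ℚ (c ^ 2))) ≠ 0 → C (-z) = - C z) ∧
    (∀ z : ℂ,
      (z * (z * ∏ k : Fin n, (z ^ 2 + ((a k : ℚ) : ℂ) ^ 2)) -
        aeval (z ^ 2) (minpoly ℚ (c ^ 2))) ≠ 0 → C z = 0 →
      z.re = 0 ∧ 0 < (deriv C z).re ∧ (deriv C z).im = 0) := by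
  have hc0 : (c : ℂ) ≠ 0 := by exact_mod_cast hc.ne'
  have hapos : ∀ k : Fin n, (0 : ℝ) < (a k : ℝ) := fun k => (hbpos k).trans (hab k)
  -- evaluation of the minimal polynomial over ℂ
  have hP : ∀ w : ℂ, aeval w (minpoly ℚ (c ^ 2)) =
      (w - (c : ℂ) ^ 2) * ∏ k : Fin n, (w + ((b k : ℝ) : ℂ) ^ 2) := by
    intro w
    rw [← Polynomial.aeval_map_algebraMap ℝ w (minpoly ℚ (c ^ 2)), hfact]
    simp only [map_mul, map_sub, map_add, map_prod, aeval_X, aeval_C,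
      Complex.coe_algebraMap]
    push_cast
    ring
  -- strict antitonicity of a
  have hstep : ∀ (m : ℕ) (h : m + 1 < n),
      ((a ⟨m + 1, h⟩ : ℚ) : ℝ) < ((a ⟨m, Nat.lt_of_succ_lt h⟩ : ℚ) : ℝ) :=
    fun m h => (hba m h).trans (hab _)
  have hanti : ∀ j l : Fin n, (j : ℕ) < (l : ℕ) → ((a l : ℚ) : ℝ) < ((a j : ℚ) : ℝ) := by
    intro j l hjl
    obtain ⟨d, hd⟩ := Nat.exists_eq_add_of_lt hjl
    induction d generalizing l with
    | zero =>
      have hl := l.isLt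
      have h1 : (j : ℕ) + 1 < n := by omega
      have e : l = ⟨(j : ℕ) + 1, h1⟩ := Fin.ext (by simp; omega)
      rw [e]
      simpa using hstep (j : ℕ) h1
    | succ d ih =>
      have hl := l.isLt
      have h1 : (j : ℕ) + d + 1 < n := by omega
      have h2 : (j : ℕ) + d + 1 + 1 < n := by omega
      have e : l = ⟨(j : ℕ) + d + 1 + 1, h2⟩ := Fin.ext (by simp; omega)
      calc ((a l : ℚ) : ℝ) = ((a ⟨(j : ℕ) + d + 1 + 1, h2⟩ : ℚ) : ℝ) := by rw [e]
        _ < ((a ⟨(j : ℕ) + d + 1, h1⟩ : ℚ) : ℝ) := by simpa using hstep _ h2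
        _ < ((a j : ℚ) : ℝ) := ih ⟨(j : ℕ) + d + 1, h1⟩ (by simp) (by simp)
  have hbchain : ∀ j l : Fin n, (j : ℕ) < (l : ℕ) → ((a l : ℚ) : ℝ) < b j := by
    intro j l hjl
    have hl := l.isLt
    have h1 : (j : ℕ) + 1 < n := by omega
    have h2 : ((a l : ℚ) : ℝ) ≤ ((a ⟨(j : ℕ) + 1, h1⟩ : ℚ) : ℝ) := by
      rcases eq_or_lt_of_le (show (j : ℕ) + 1 ≤ (l : ℕ) from hjl) with he | hlt
      · exact le_of_eq (by rw [show l = ⟨(j : ℕ) + 1, h1⟩ from Fin.ext he.symm])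
      · exact (hanti ⟨(j : ℕ) + 1, h1⟩ l hlt).le
    calc ((a l : ℚ) : ℝ) ≤ _ := h2
      _ < b j := by simpa using hba (j : ℕ) h1
  -- derivative machinery
  have hprodA : ∀ z : ℂ, HasDerivAt (fun w : ℂ => ∏ k : Fin n, (w ^ 2 + ((a k : ℚ) : ℂ) ^ 2))
      (∑ k : Fin n, (∏ j ∈ Finset.univ.erase k, (z ^ 2 + ((a j : ℚ) : ℂ) ^ 2)) * (2 * z)) z := by
    intro z
    have h : ∀ k : Fin n, k ∈ (Finset.univ : Finset (Fin n)) →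
        HasDerivAt (fun w : ℂ => w ^ 2 + ((a k : ℚ) : ℂ) ^ 2) (2 * z) z := by
      intro k _
      simpa using (hasDerivAt_pow 2 z).add_const (((a k : ℚ) : ℂ) ^ 2)
    simpa [smul_eq_mul] using HasDerivAt.fun_finsetProd h
  have hprodB : ∀ z : ℂ, HasDerivAt (fun w : ℂ => ∏ k : Fin n, (w ^ 2 + ((b k : ℝ) : ℂ) ^ 2))
      (∑ k : Fin n, (∏ j ∈ Finset.univ.erase k, (z ^ 2 + ((b j : ℝ) : ℂ) ^ 2)) * (2 * z)) z := by
    intro z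
    have h : ∀ k : Fin n, k ∈ (Finset.univ : Finset (Fin n)) →
        HasDerivAt (fun w : ℂ => w ^ 2 + ((b k : ℝ) : ℂ) ^ 2) (2 * z) z := by
      intro k _
      simpa using (hasDerivAt_pow 2 z).add_const (((b k : ℝ) : ℂ) ^ 2)
    simpa [smul_eq_mul] using HasDerivAt.fun_finsetProd h
  have hNder : ∀ z : ℂ, HasDerivAt (fun w : ℂ => w * ∏ k : Fin n, (w ^ 2 + ((a k : ℚ) : ℂ) ^ 2))
      (1 * (∏ k : Fin n, (z ^ 2 + ((a k : ℚ) : ℂ) ^ 2)) +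
        z * ∑ k : Fin n, (∏ j ∈ Finset.univ.erase k, (z ^ 2 + ((a j : ℚ) : ℂ) ^ 2)) * (2 * z)) z :=
    fun z => (hasDerivAt_id z).mul (hprodA z)
  have hDdiff : ∀ z : ℂ, DifferentiableAt ℂ
      (fun w : ℂ => w * (w * ∏ k : Fin n, (w ^ 2 + ((a k : ℚ) : ℂ) ^ 2)) -
        aeval (w ^ 2) (minpoly ℚ (c ^ 2))) z := by
    intro z
    apply DifferentiableAt.sub
    · exact differentiableAt_fun_id.mul (hNder z).differentiableAt
    · have he : (fun w : ℂ => (aeval (w ^ 2) (minpoly ℚ (c ^ 2)) : ℂ)) =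
          fun w : ℂ => (w ^ 2 - (c : ℂ) ^ 2) * ∏ k : Fin n, (w ^ 2 + ((b k : ℝ) : ℂ) ^ 2) :=
        funext fun w => hP (w ^ 2)
      rw [he]
      exact ((differentiableAt_pow 2).sub_const _).mul (hprodB z).differentiableAt
  have hderiv : ∀ z : ℂ,
      (z * (z * ∏ k : Fin n, (z ^ 2 + ((a k : ℚ) : ℂ) ^ 2)) -
        aeval (z ^ 2) (minpoly ℚ (c ^ 2))) ≠ 0 →
      z * ∏ k : Fin n, (z ^ 2 + ((a k : ℚ) : ℂ) ^ 2) = 0 →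
      deriv C z = (1 * (∏ k : Fin n, (z ^ 2 + ((a k : ℚ) : ℂ) ^ 2)) +
        z * ∑ k : Fin n, (∏ j ∈ Finset.univ.erase k, (z ^ 2 + ((a j : ℚ) : ℂ) ^ 2)) * (2 * z)) /
        (z * (z * ∏ k : Fin n, (z ^ 2 + ((a k : ℚ) : ℂ) ^ 2)) -
          aeval (z ^ 2) (minpoly ℚ (c ^ 2))) := by
    intro z hz hN0
    exact deriv_eq_of_div'
      (N := fun w : ℂ => w * ∏ k : Fin n, (w ^ 2 + ((a k : ℚ) : ℂ) ^ 2))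
      (D := fun w : ℂ => w * (w * ∏ k : Fin n, (w ^ 2 + ((a k : ℚ) : ℂ) ^ 2)) -
        aeval (w ^ 2) (minpoly ℚ (c ^ 2)))
      hC (hNder z) (hDdiff z) hz hN0
  refine ⟨?_, ?_, ?_⟩
  · -- C c = 1/c
    have haevalc : aeval ((c : ℂ) ^ 2) (minpoly ℚ (c ^ 2)) = 0 := by
      rw [hP]; simp
    have hprodc : (∏ k : Fin n, ((c : ℂ) ^ 2 + ((a k : ℚ) : ℂ) ^ 2)) ≠ 0 := by
      rw [Finset.prod_ne_zero_iff]
      intro k _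
      have he : ((c : ℂ) ^ 2 + ((a k : ℚ) : ℂ) ^ 2) = ((c ^ 2 + (a k : ℝ) ^ 2 : ℝ) : ℂ) := by
        push_cast; ring
      rw [he]
      exact_mod_cast (by positivity : (0 : ℝ) < c ^ 2 + (a k : ℝ) ^ 2).ne'
    rw [hC, haevalc, sub_zero,
      div_eq_div_iff (mul_ne_zero hc0 (mul_ne_zero hc0 hprodc)) hc0]
    ring
  · -- odd
    intro z hz
    rw [hC, hC]
    simp only [neg_sq]
    generalize (∏ k : Fin n, (z ^ 2 + ((a k : ℚ) : ℂ) ^ 2)) = P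
    generalize aeval (z ^ 2) (minpoly ℚ (c ^ 2)) = Q
    rw [show -z * (-z * P) = z * (z * P) by ring, show -z * P = -(z * P) by ring, neg_div]
  · -- zeros
    intro z hz hz0
    have hN0 : z * ∏ k : Fin n, (z ^ 2 + ((a k : ℚ) : ℂ) ^ 2) = 0 := by
      rw [hC] at hz0
      rcases div_eq_zero_iff.mp hz0 with h | h
      · exact h
      · exact absurd h hz
    have hder := hderiv z hz hN0
    rcases mul_eq_zero.mp hN0 with rfl | hprod0
    · -- z = 0
      have hproda0 : (∏ k : Fin n, ((0 : ℂ) ^ 2 + ((a k : ℚ) : ℂ) ^ 2)) =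
          ((∏ k : Fin n, (a k : ℝ) ^ 2 : ℝ) : ℂ) := by
        rw [Complex.ofReal_prod]
        exact Finset.prod_congr rfl fun k _ => by push_cast; ring
      have hprodb0 : (∏ k : Fin n, ((0 : ℂ) ^ 2 + ((b k : ℝ) : ℂ) ^ 2)) =
          ((∏ k : Fin n, (b k) ^ 2 : ℝ) : ℂ) := by
        rw [Complex.ofReal_prod]
        exact Finset.prod_congr rfl fun k _ => by push_cast; ring
      have hreal : deriv C 0 =
          (((∏ k : Fin n, (a k : ℝ) ^ 2) / (c ^ 2 * ∏ k : Fin n, (b k) ^ 2) : ℝ) : ℂ) := by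
        rw [hder, hP, hproda0, hprodb0, Complex.ofReal_div, Complex.ofReal_mul,
          Complex.ofReal_pow]
        ring
      have hrpos : 0 < (∏ k : Fin n, (a k : ℝ) ^ 2) / (c ^ 2 * ∏ k : Fin n, (b k) ^ 2) := by
        apply div_pos
        · exact Finset.prod_pos fun k _ => pow_pos (hapos k) 2
        · exact mul_pos (pow_pos hc 2) (Finset.prod_pos fun k _ => pow_pos (hbpos k) 2)
      exact ⟨Complex.zero_re, by rw [hreal, Complex.ofReal_re]; exact hrpos,
        by rw [hreal]; exact Complex.ofReal_im _⟩
    · -- z² = -aₗ²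
      obtain ⟨l, -, hfac⟩ := Finset.prod_eq_zero_iff.mp hprod0
      have hzsq : z ^ 2 = ((-((a l : ℝ) ^ 2) : ℝ) : ℂ) := by
        push_cast
        linear_combination hfac
      have hAl : (0 : ℝ) < (a l : ℝ) := hapos l
      -- real part is zero
      have him : (z ^ 2).im = 0 := by rw [hzsq]; exact Complex.ofReal_im _
      have hre2 : (z ^ 2).re < 0 := by
        rw [hzsq]
        simp only [Complex.ofReal_re]
        nlinarith
      have hzre : z.re = 0 := by
        rw [pow_two, Complex.mul_im] at him
        rw [pow_two, Complex.mul_re] at hre2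
        by_contra h
        have h2 : z.im = 0 := by
          rcases mul_eq_zero.mp (show z.re * z.im = 0 by linarith) with h' | h'
          · exact absurd h' h
          · exact h'
        rw [h2] at hre2
        nlinarith [mul_self_nonneg z.re]
      -- value of the derivative
      have hp0 : (∏ k : Fin n, (z ^ 2 + ((a k : ℚ) : ℂ) ^ 2)) = 0 :=
        Finset.prod_eq_zero (Finset.mem_univ l) hfac
      have hsum : (∑ k : Fin n, (∏ j ∈ Finset.univ.erase k, (z ^ 2 + ((a j : ℚ) : ℂ) ^ 2)) * (2 * z)) =
          (∏ j ∈ Finset.univ.erase l, (z ^ 2 + ((a j : ℚ) : ℂ) ^ 2)) * (2 * z) := by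
        refine Finset.sum_eq_single_of_mem l (Finset.mem_univ l) fun k _ hkl => ?_
        rw [Finset.prod_eq_zero (Finset.mem_erase.mpr ⟨Ne.symm hkl, Finset.mem_univ l⟩) hfac,
          zero_mul]
      have hprodAl : (∏ j ∈ Finset.univ.erase l, (z ^ 2 + ((a j : ℚ) : ℂ) ^ 2)) =
          ((∏ j ∈ Finset.univ.erase l, ((a j : ℝ) ^ 2 - (a l : ℝ) ^ 2) : ℝ) : ℂ) := by
        rw [Complex.ofReal_prod]
        exact Finset.prod_congr rfl fun j _ => by rw [hzsq]; push_cast; ring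
      have hprodBl : (∏ k : Fin n, (z ^ 2 + ((b k : ℝ) : ℂ) ^ 2)) =
          ((∏ k : Fin n, ((b k) ^ 2 - (a l : ℝ) ^ 2) : ℝ) : ℂ) := by
        rw [Complex.ofReal_prod]
        exact Finset.prod_congr rfl fun k _ => by rw [hzsq]; push_cast; ring
      have hNv : (1 : ℂ) * (∏ k : Fin n, (z ^ 2 + ((a k : ℚ) : ℂ) ^ 2)) +
          z * ∑ k : Fin n, (∏ j ∈ Finset.univ.erase k, (z ^ 2 + ((a j : ℚ) : ℂ) ^ 2)) * (2 * z) =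
          ((-2 * (a l : ℝ) ^ 2 * ∏ j ∈ Finset.univ.erase l, ((a j : ℝ) ^ 2 - (a l : ℝ) ^ 2) : ℝ) : ℂ) := by
        rw [hp0, hsum]
        calc (1 : ℂ) * 0 +
            z * ((∏ j ∈ Finset.univ.erase l, (z ^ 2 + ((a j : ℚ) : ℂ) ^ 2)) * (2 * z))
            = 2 * z ^ 2 * ∏ j ∈ Finset.univ.erase l, (z ^ 2 + ((a j : ℚ) : ℂ) ^ 2) := by ring
          _ = _ := by rw [hprodAl, hzsq]; push_cast; ring
      have hDv : z * (z * ∏ k : Fin n, (z ^ 2 + ((a k : ℚ) : ℂ) ^ 2)) -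
          aeval (z ^ 2) (minpoly ℚ (c ^ 2)) =
          ((((a l : ℝ) ^ 2 + c ^ 2) * ∏ k : Fin n, ((b k) ^ 2 - (a l : ℝ) ^ 2) : ℝ) : ℂ) := by
        rw [hN0, mul_zero, zero_sub, hP, hprodBl, hzsq]
        push_cast
        ring
      have hreal : deriv C z =
          (((-2 * (a l : ℝ) ^ 2 * ∏ j ∈ Finset.univ.erase l, ((a j : ℝ) ^ 2 - (a l : ℝ) ^ 2)) /
            (((a l : ℝ) ^ 2 + c ^ 2) * ∏ k : Fin n, ((b k) ^ 2 - (a l : ℝ) ^ 2)) : ℝ) : ℂ) := by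
        rw [hder, hNv, hDv, ← Complex.ofReal_div]
      -- sign analysis
      have hS12 : (∏ j ∈ Finset.univ.erase l, ((a j : ℝ) ^ 2 - (a l : ℝ) ^ 2)) *
          (∏ k : Fin n, ((b k) ^ 2 - (a l : ℝ) ^ 2)) < 0 := by
        have hsplit : (∏ j ∈ Finset.univ.erase l, ((a j : ℝ) ^ 2 - (a l : ℝ) ^ 2)) *
            (∏ k : Fin n, ((b k) ^ 2 - (a l : ℝ) ^ 2)) =
            ((b l) ^ 2 - (a l : ℝ) ^ 2) *
            ∏ j ∈ Finset.univ.erase l, (((a j : ℝ) ^ 2 - (a l : ℝ) ^ 2) * ((b j) ^ 2 - (a l : ℝ) ^ 2)) := by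
          rw [Finset.prod_mul_distrib,
            ← Finset.mul_prod_erase Finset.univ (fun k => (b k) ^ 2 - (a l : ℝ) ^ 2)
              (Finset.mem_univ l)]
          ring
        rw [hsplit]
        apply mul_neg_of_neg_of_pos
        · nlinarith [hab l, hbpos l]
        · apply Finset.prod_pos
          intro j hj
          have hjl : j ≠ l := (Finset.mem_erase.mp hj).1
          rcases lt_or_gt_of_ne (fun h : (j : ℕ) = (l : ℕ) => hjl (Fin.ext h)) with h | h
          · have h1 : ((a l : ℚ) : ℝ) < (a j : ℝ) := hanti j l h
            have h2 : ((a l : ℚ) : ℝ) < b j := hbchain j l h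
            exact mul_pos (by nlinarith) (by nlinarith [hbpos j])
          · have h1 : ((a j : ℚ) : ℝ) < (a l : ℝ) := hanti l j h
            have h2 : b j < (a j : ℝ) := hab j
            exact mul_pos_of_neg_of_neg (by nlinarith [hapos j]) (by nlinarith [hbpos j, hapos j])
      have hed : 0 < (-2 * (a l : ℝ) ^ 2 * ∏ j ∈ Finset.univ.erase l, ((a j : ℝ) ^ 2 - (a l : ℝ) ^ 2)) *
          (((a l : ℝ) ^ 2 + c ^ 2) * ∏ k : Fin n, ((b k) ^ 2 - (a l : ℝ) ^ 2)) := by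
        have he : (-2 * (a l : ℝ) ^ 2 * ∏ j ∈ Finset.univ.erase l, ((a j : ℝ) ^ 2 - (a l : ℝ) ^ 2)) *
            (((a l : ℝ) ^ 2 + c ^ 2) * ∏ k : Fin n, ((b k) ^ 2 - (a l : ℝ) ^ 2)) =
            (2 * (a l : ℝ) ^ 2 * ((a l : ℝ) ^ 2 + c ^ 2)) *
            (-((∏ j ∈ Finset.univ.erase l, ((a j : ℝ) ^ 2 - (a l : ℝ) ^ 2)) *
              (∏ k : Fin n, ((b k) ^ 2 - (a l : ℝ) ^ 2)))) := by ring
        rw [he]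
        apply mul_pos
        · have h3 : (0 : ℝ) < (a l : ℝ) ^ 2 := pow_pos hAl 2
          have h4 : (0 : ℝ) < c ^ 2 := pow_pos hc 2
          nlinarith
        · linarith
      have hrpos : 0 < (-2 * (a l : ℝ) ^ 2 * ∏ j ∈ Finset.univ.erase l, ((a j : ℝ) ^ 2 - (a l : ℝ) ^ 2)) /
          (((a l : ℝ) ^ 2 + c ^ 2) * ∏ k : Fin n, ((b k) ^ 2 - (a l : ℝ) ^ 2)) := by
        rcases mul_pos_iff.mp hed with ⟨h1, h2⟩ | ⟨h1, h2⟩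
        · exact div_pos h1 h2
        · exact div_pos_of_neg_of_neg h1 h2
      exact ⟨hzre, by rw [hreal, Complex.ofReal_re]; exact hrpos,
        by rw [hreal]; exact Complex.ofReal_im _⟩
end

section
/- Existence and uniqueness (Weyl's theorem): For any finite graph with conductances c_{kl} ∈ ℂ (each with Re c_{kl} > 0 on edges) in which every connected component contains at least one of the boundary vertices 1,...,b, and any prescribed boundary values U_1,...,U_b ∈ ℂ, there exist unique U_{b+1},...,U_n ∈ ℂ such that ∑_{l=1}^n c_{kl}(U_k − U_l) = 0 for every k > b. -/
open Finset

/-- Energy argument: a voltage function vanishing on the boundary and harmonic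
in the interior vanishes everywhere. -/
lemma aux_kernel_13 (n b : ℕ) (c : Fin n → Fin n → ℂ)
    (hsymm : ∀ k l : Fin n, c k l = c l k)
    (hre : ∀ k l : Fin n, c k l = 0 ∨ 0 < (c k l).re)
    (hcomp : ∀ k : Fin n, ∃ u : Fin n, (u : ℕ) < b ∧
      Relation.ReflTransGen (fun i j : Fin n => c i j ≠ 0) k u)
    (U : Fin n → ℂ)
    (h0 : ∀ k : Fin n, (k : ℕ) < b → U k = 0)
    (hh : ∀ k : Fin n, b ≤ (k : ℕ) → ∑ l, c k l * (U k - U l) = 0) : U = 0 := by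
  set conj := (starRingEnd ℂ)
  have hA : ∑ k, conj (U k) * ∑ l, c k l * (U k - U l) = 0 := by
    apply Finset.sum_eq_zero
    intro k _
    rcases lt_or_ge (k : ℕ) b with h | h
    · simp [h0 k h]
    · rw [hh k h, mul_zero]
  have hswap : ∑ k, ∑ l, c k l * (-conj (U l)) * (U k - U l)
      = ∑ k, ∑ l, c k l * conj (U k) * (U k - U l) := by
    rw [Finset.sum_comm]
    refine Finset.sum_congr rfl fun x _ => Finset.sum_congr rfl fun y _ => ?_
    rw [hsymm y x]; ring
  have hB : ∑ k, ∑ l, c k l * (conj (U k) - conj (U l)) * (U k - U l) = 0 := by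
    have expand : ∑ k, ∑ l, c k l * (conj (U k) - conj (U l)) * (U k - U l)
        = (∑ k, ∑ l, c k l * conj (U k) * (U k - U l))
          + ∑ k, ∑ l, c k l * (-conj (U l)) * (U k - U l) := by
      rw [← Finset.sum_add_distrib]
      refine Finset.sum_congr rfl fun k _ => ?_
      rw [← Finset.sum_add_distrib]
      exact Finset.sum_congr rfl fun l _ => by ring
    have hAsum : ∑ k, ∑ l, c k l * conj (U k) * (U k - U l) = 0 := by
      rw [← hA]
      refine Finset.sum_congr rfl fun k _ => ?_
      rw [Finset.mul_sum]
      exact Finset.sum_congr rfl fun l _ => by ring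
    rw [expand, hswap, hAsum]; ring
  have hRe : ∑ k, ∑ l, (c k l).re * Complex.normSq (U k - U l) = 0 := by
    have := congrArg Complex.re hB
    simp only [Complex.re_sum, Complex.zero_re] at this
    rw [← this]
    refine Finset.sum_congr rfl fun k _ => ?_
    refine Finset.sum_congr rfl fun l _ => ?_
    have : c k l * (conj (U k) - conj (U l)) * (U k - U l)
        = c k l * (Complex.normSq (U k - U l) : ℂ) := by
      rw [mul_assoc]
      congr 1
      rw [show conj (U k) - conj (U l) = conj (U k - U l) by simp [conj, map_sub]]
      rw [mul_comm, Complex.mul_conj]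
    rw [this]
    simp [Complex.mul_re]
  have hterm : ∀ k l : Fin n, (c k l).re * Complex.normSq (U k - U l) = 0 := by
    have hnn : ∀ k l : Fin n, 0 ≤ (c k l).re * Complex.normSq (U k - U l) := by
      intro k l
      rcases hre k l with h | h
      · simp [h]
      · exact mul_nonneg h.le (Complex.normSq_nonneg _)
    intro k l
    have h1 := (Finset.sum_eq_zero_iff_of_nonneg
      (fun k _ => Finset.sum_nonneg fun l _ => hnn k l)).mp hRe k (Finset.mem_univ k)
    exact (Finset.sum_eq_zero_iff_of_nonneg (fun l _ => hnn k l)).mp h1 l (Finset.mem_univ l)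
  have hedge : ∀ k l : Fin n, c k l ≠ 0 → U k = U l := by
    intro k l hkl
    rcases hre k l with h | h
    · exact absurd h hkl
    · have hns : Complex.normSq (U k - U l) = 0 := by
        rcases mul_eq_zero.mp (hterm k l) with h' | h'
        · exact absurd h' (ne_of_gt h)
        · exact h'
      exact sub_eq_zero.mp (Complex.normSq_eq_zero.mp hns)
  have hconst : ∀ x y : Fin n,
      Relation.ReflTransGen (fun i j : Fin n => c i j ≠ 0) x y → U x = U y := by
    intro x y hp
    induction hp with
    | refl => rfl
    | tail _ hstep ih => exact ih.trans (hedge _ _ hstep)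
  funext k
  obtain ⟨u, hu, hpath⟩ := hcomp k
  rw [hconst k u hpath, h0 u hu]; rfl

/-- Existence and uniqueness (Weyl's theorem): for a finite network on vertices
`0, …, n−1` with boundary vertices those of index `< b`, symmetric conductances with
zero diagonal which are either zero or of positive real part, such that every
connected component contains a boundary vertex, and for any prescribed boundary
values, there is a unique choice of interior voltages making the voltage function
discrete harmonic at every interior vertex. -/
theorem stmt_13 (n b : ℕ) (hb : 1 ≤ b) (hbn : b ≤ n)
    (c : Fin n → Fin n → ℂ)
    (hsymm : ∀ k l : Fin n, c k l = c l k)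
    (hdiag : ∀ k : Fin n, c k k = 0)
    (hre : ∀ k l : Fin n, c k l = 0 ∨ 0 < (c k l).re)
    (hcomp : ∀ k : Fin n, ∃ u : Fin n, (u : ℕ) < b ∧
      Relation.ReflTransGen (fun i j : Fin n => c i j ≠ 0) k u)
    (W : Fin n → ℂ) :
    ∃! U : Fin n → ℂ,
      (∀ k : Fin n, (k : ℕ) < b → U k = W k) ∧
      (∀ k : Fin n, b ≤ (k : ℕ) → ∑ l, c k l * (U k - U l) = 0) := by
  let T : (Fin n → ℂ) →ₗ[ℂ] (Fin n → ℂ) :=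
    { toFun := fun U k => if (k : ℕ) < b then U k else ∑ l, c k l * (U k - U l)
      map_add' := by
        intro x y
        funext k
        by_cases h : (k : ℕ) < b
        · simp [h]
        · simp only [h, if_false, Pi.add_apply, ← Finset.sum_add_distrib]
          exact Finset.sum_congr rfl fun l _ => by ring
      map_smul' := by
        intro a x
        funext k
        by_cases h : (k : ℕ) < b
        · simp [h]
        · simp only [h, if_false, Pi.smul_apply, smul_eq_mul, RingHom.id_apply,
            Finset.mul_sum]
          exact Finset.sum_congr rfl fun l _ => by ring }
  have hT : ∀ (U : Fin n → ℂ) (k : Fin n),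
      T U k = if (k : ℕ) < b then U k else ∑ l, c k l * (U k - U l) := fun _ _ => rfl
  have hinj : Function.Injective T := by
    rw [← LinearMap.ker_eq_bot, LinearMap.ker_eq_bot']
    intro U hU
    apply aux_kernel_13 n b c hsymm hre hcomp U
    · intro k hk
      have := congrFun hU k
      rwa [hT, if_pos hk] at this
    · intro k hk
      have := congrFun hU k
      rwa [hT, if_neg (not_lt.mpr hk)] at this
  have hsurj : Function.Surjective T := (LinearMap.injective_iff_surjective).mp hinj
  obtain ⟨U, hUeq⟩ := hsurj (fun k => if (k : ℕ) < b then W k else 0)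
  have hUb : ∀ k : Fin n, (k : ℕ) < b → U k = W k := by
    intro k hk
    have := congrFun hUeq k
    rwa [hT, if_pos hk, if_pos hk] at this
  have hUi : ∀ k : Fin n, b ≤ (k : ℕ) → ∑ l, c k l * (U k - U l) = 0 := by
    intro k hk
    have := congrFun hUeq k
    rwa [hT, if_neg (not_lt.mpr hk), if_neg (not_lt.mpr hk)] at this
  refine ⟨U, ⟨hUb, hUi⟩, ?_⟩
  rintro V ⟨hVb, hVi⟩
  apply hinj
  funext k
  rw [hT, hT]
  by_cases h : (k : ℕ) < b
  · rw [if_pos h, if_pos h, hVb k h, hUb k h]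
  · rw [if_neg h, if_neg h, hVi k (not_lt.mp h), hUi k (not_lt.mp h)]
end

section
/- Derivative of the response: with notation as above and real positive conductances, ∂C_{uv}/∂c_j = (V_{ku} − V_{lu})(V_{kv} − V_{lv}), where k, l are the endpoints of edge j and V_{pq} is the matrix of the solution map sending boundary voltages (U_1,...,U_b) to the full voltage vector (U_1,...,U_n). Consequently, the matrix ∂C/∂c_j is positive semidefinite. -/
/-- The conductance matrix of a network with `m` edges with endpoints `e₁ j`, `e₂ j`
and edge conductances `x j`. -/
noncomputable def condMat {n m : ℕ} (e₁ e₂ : Fin m → Fin n) (x : Fin m → ℝ)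
    (k l : Fin n) : ℝ :=
  ∑ j : Fin m, if (e₁ j = k ∧ e₂ j = l) ∨ (e₁ j = l ∧ e₂ j = k) then x j else 0

/-- The Dirichlet energy bilinear form. -/
noncomputable def Ebil {n m : ℕ} (e₁ e₂ : Fin m → Fin n) (x : Fin m → ℝ)
    (f g : Fin n → ℝ) : ℝ :=
  ∑ j : Fin m, x j * (f (e₁ j) - f (e₂ j)) * (g (e₁ j) - g (e₂ j))

lemma Ebil_symm {n m : ℕ} (e₁ e₂ : Fin m → Fin n) (x : Fin m → ℝ) (f g : Fin n → ℝ) :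
    Ebil e₁ e₂ x f g = Ebil e₁ e₂ x g f :=
  Finset.sum_congr rfl fun _ _ => by ring

lemma Ebil_sub_left {n m : ℕ} (e₁ e₂ : Fin m → Fin n) (x : Fin m → ℝ)
    (f₁ f₂ g : Fin n → ℝ) :
    Ebil e₁ e₂ x (fun k => f₁ k - f₂ k) g = Ebil e₁ e₂ x f₁ g - Ebil e₁ e₂ x f₂ g := by
  unfold Ebil
  rw [← Finset.sum_sub_distrib]
  exact Finset.sum_congr rfl fun _ _ => by ring

lemma Ebil_update {n m : ℕ} (e₁ e₂ : Fin m → Fin n) (x : Fin m → ℝ) (j : Fin m)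
    (t : ℝ) (f g : Fin n → ℝ) :
    Ebil e₁ e₂ (Function.update x j t) f g = Ebil e₁ e₂ x f g +
      (t - x j) * (f (e₁ j) - f (e₂ j)) * (g (e₁ j) - g (e₂ j)) := by
  unfold Ebil
  rw [← sub_eq_iff_eq_add', ← Finset.sum_sub_distrib]
  have h : ∀ j' : Fin m, j' ∈ Finset.univ →
      Function.update x j t j' * (f (e₁ j') - f (e₂ j')) * (g (e₁ j') - g (e₂ j')) -
        x j' * (f (e₁ j') - f (e₂ j')) * (g (e₁ j') - g (e₂ j')) =
      if j' = j then (t - x j) * (f (e₁ j) - f (e₂ j)) * (g (e₁ j) - g (e₂ j)) else 0 := by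
    intro j' _
    by_cases hj : j' = j
    · subst hj; rw [Function.update_self]; simp; ring
    · rw [Function.update_of_ne hj]; simp [hj]
  rw [Finset.sum_congr rfl h, Finset.sum_ite_eq' Finset.univ j]
  simp

lemma sum_pair {n : ℕ} (a c : Fin n) (A : Fin n → Fin n → ℝ) :
    (∑ k : Fin n, ∑ l : Fin n, if a = k ∧ c = l then A k l else 0) = A a c := by
  simp [ite_and, Finset.sum_ite_eq]

lemma ite_or_add {p q : Prop} [Decidable p] [Decidable q] (h : ¬(p ∧ q)) (a : ℝ) :
    (if p ∨ q then a else 0) = (if p then a else 0) + (if q then a else 0) := by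
  by_cases hp : p <;> by_cases hq : q <;> simp_all

/-- Summation by parts: the node form of the energy. -/
lemma sum_by_parts {n m : ℕ} (e₁ e₂ : Fin m → Fin n) (hee : ∀ j, e₁ j ≠ e₂ j)
    (x : Fin m → ℝ) (f g : Fin n → ℝ) :
    ∑ k : Fin n, g k * (∑ l : Fin n, condMat e₁ e₂ x k l * (f k - f l)) =
      Ebil e₁ e₂ x f g := by
  have step1 : ∑ k : Fin n, g k * (∑ l : Fin n, condMat e₁ e₂ x k l * (f k - f l)) =
      ∑ j : Fin m, ∑ k : Fin n, ∑ l : Fin n,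
        (if (e₁ j = k ∧ e₂ j = l) ∨ (e₁ j = l ∧ e₂ j = k)
          then x j * g k * (f k - f l) else 0) := by
    rw [Finset.sum_comm]
    apply Finset.sum_congr rfl; intro k _
    rw [Finset.mul_sum, Finset.sum_comm]
    apply Finset.sum_congr rfl; intro l _
    rw [condMat, Finset.sum_mul, Finset.mul_sum]
    apply Finset.sum_congr rfl; intro j _
    split <;> ring
  rw [step1]
  apply Finset.sum_congr rfl; intro j _
  have hsplit : ∀ k l : Fin n,
      (if (e₁ j = k ∧ e₂ j = l) ∨ (e₁ j = l ∧ e₂ j = k)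
        then x j * g k * (f k - f l) else 0) =
      (if e₁ j = k ∧ e₂ j = l then x j * g k * (f k - f l) else 0) +
      (if e₁ j = l ∧ e₂ j = k then x j * g k * (f k - f l) else 0) := by
    intro k l
    apply ite_or_add
    rintro ⟨⟨h1, h2⟩, ⟨h3, h4⟩⟩
    exact hee j (h1.trans h4.symm)
  simp_rw [hsplit, Finset.sum_add_distrib]
  rw [sum_pair (e₁ j) (e₂ j) (fun k l => x j * g k * (f k - f l))]
  have : (∑ k : Fin n, ∑ l : Fin n,
      if e₁ j = l ∧ e₂ j = k then x j * g k * (f k - f l) else 0) =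
      x j * g (e₂ j) * (f (e₂ j) - f (e₁ j)) := by
    have h2 : ∀ k l : Fin n, (if e₁ j = l ∧ e₂ j = k then x j * g k * (f k - f l) else 0) =
        (if e₂ j = k ∧ e₁ j = l then x j * g k * (f k - f l) else 0) := by
      intro k l; exact if_congr and_comm rfl rfl
    simp_rw [h2]
    exact sum_pair (e₂ j) (e₁ j) (fun k l => x j * g k * (f k - f l))
  rw [this]
  ring

lemma Ebil_harm {n b m : ℕ} (e₁ e₂ : Fin m → Fin n) (hee : ∀ j, e₁ j ≠ e₂ j)
    (x : Fin m → ℝ) (f g : Fin n → ℝ)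
    (hf : ∀ k : Fin n, b ≤ (k : ℕ) → ∑ l, condMat e₁ e₂ x k l * (f k - f l) = 0)
    (hg : ∀ k : Fin n, (k : ℕ) < b → g k = 0) :
    Ebil e₁ e₂ x f g = 0 := by
  rw [← sum_by_parts e₁ e₂ hee]
  apply Finset.sum_eq_zero; intro k _
  rcases lt_or_ge (k : ℕ) b with h | h
  · rw [hg k h, zero_mul]
  · rw [hf k h, mul_zero]

lemma Cm_rep {n b m : ℕ} (hbn : b ≤ n) (e₁ e₂ : Fin m → Fin n) (hee : ∀ j, e₁ j ≠ e₂ j)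
    (x : Fin m → ℝ) (V : Fin n → Fin b → ℝ) (u v : Fin b)
    (hVb : ∀ u' w : Fin b, V (Fin.castLE hbn u') w = if u' = w then 1 else 0)
    (hVh : ∀ k : Fin n, b ≤ (k : ℕ) → ∑ l, condMat e₁ e₂ x k l * (V k v - V l v) = 0) :
    (∑ k, condMat e₁ e₂ x (Fin.castLE hbn u) k * (V (Fin.castLE hbn u) v - V k v)) =
      Ebil e₁ e₂ x (fun k => V k v) (fun k => V k u) := by
  rw [← sum_by_parts e₁ e₂ hee]
  have key : ∀ k : Fin n, k ∈ Finset.univ →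
      V k u * (∑ l, condMat e₁ e₂ x k l * (V k v - V l v)) =
      if Fin.castLE hbn u = k then
        ∑ l, condMat e₁ e₂ x k l * (V k v - V l v) else 0 := by
    intro k _
    rcases lt_or_ge (k : ℕ) b with h | h
    · have hk : Fin.castLE hbn (⟨(k : ℕ), h⟩ : Fin b) = k := Fin.ext rfl
      rw [← hk, hVb ⟨(k : ℕ), h⟩ u]
      by_cases huu : (⟨(k : ℕ), h⟩ : Fin b) = u
      · rw [huu]; simp
      · have hne : ¬ (Fin.castLE hbn u = Fin.castLE hbn ⟨(k : ℕ), h⟩) := by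
          intro hc
          exact huu (Fin.castLE_injective hbn hc).symm
        rw [if_neg huu, zero_mul]
        exact (if_neg fun hc => hne (hc.trans hk.symm)).symm
    · rw [hVh k h]; simp
  rw [eq_comm, Finset.sum_congr rfl key, Finset.sum_ite_eq Finset.univ (Fin.castLE hbn u)]
  simp

/-- Derivative of the response: let `V x` be the (unique) solution map of the
discrete Dirichlet problem for a network with positive edge conductances
`x = (c_1, …, c_m)` and every component meeting the boundary, and let `Cm x` be the
response matrix.  Then `∂C_{uv}/∂c_j = (V_{ku} − V_{lu})(V_{kv} − V_{lv})` where
`k, l` are the endpoints of edge `j`; consequently `∂C/∂c_j` is positive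
semidefinite. -/
theorem stmt_15 (n b m : ℕ) (hb : 1 ≤ b) (hbn : b ≤ n)
    (e₁ e₂ : Fin m → Fin n) (hee : ∀ j : Fin m, e₁ j ≠ e₂ j)
    (V : (Fin m → ℝ) → Fin n → Fin b → ℝ)
    (Cm : (Fin m → ℝ) → Fin b → Fin b → ℝ)
    (x₀ : Fin m → ℝ) (hx₀ : ∀ j, 0 < x₀ j)
    (hcomp : ∀ k : Fin n, ∃ u : Fin n, (u : ℕ) < b ∧
      Relation.ReflTransGen (fun i j : Fin n => condMat e₁ e₂ x₀ i j ≠ 0) k u)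
    (hV : ∀ x : Fin m → ℝ, (∀ j, 0 < x j) → ∀ v : Fin b,
      (∀ u : Fin b, V x (Fin.castLE hbn u) v = if u = v then 1 else 0) ∧
      (∀ k : Fin n, b ≤ (k : ℕ) →
        ∑ l, condMat e₁ e₂ x k l * (V x k v - V x l v) = 0))
    (hCm : ∀ x : Fin m → ℝ, (∀ j, 0 < x j) → ∀ u v : Fin b,
      Cm x u v = ∑ k, condMat e₁ e₂ x (Fin.castLE hbn u) k *
        (V x (Fin.castLE hbn u) v - V x k v)) :
    ∀ (j : Fin m) (u v : Fin b),
      HasDerivAt (fun t : ℝ => Cm (Function.update x₀ j t) u v)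
        ((V x₀ (e₁ j) u - V x₀ (e₂ j) u) * (V x₀ (e₁ j) v - V x₀ (e₂ j) v)) (x₀ j) ∧
      ∀ W : Fin b → ℝ, 0 ≤ ∑ u' : Fin b, ∑ v' : Fin b,
        ((V x₀ (e₁ j) u' - V x₀ (e₂ j) u') * (V x₀ (e₁ j) v' - V x₀ (e₂ j) v')) *
          W u' * W v' := by
  intro j u v
  have ha : 0 < x₀ j := hx₀ j
  -- positivity of updated conductances
  have hupd_pos : ∀ t : ℝ, 0 < t → ∀ j', 0 < Function.update x₀ j t j' := by
    intro t ht j'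
    rcases eq_or_ne j' j with rfl | h
    · rwa [Function.update_self]
    · rw [Function.update_of_ne h]; exact hx₀ j'
  -- boundary values are independent of the conductances
  have hbdry : ∀ (x : Fin m → ℝ), (∀ j', 0 < x j') → ∀ (w : Fin b) (k : Fin n),
      (k : ℕ) < b → V x k w = V x₀ k w := by
    intro x hx w k hk
    have hk' : Fin.castLE hbn (⟨(k : ℕ), hk⟩ : Fin b) = k := Fin.ext rfl
    rw [← hk', (hV x hx w).1, (hV x₀ hx₀ w).1]
  -- Cm as the energy form
  have hCE : ∀ (x : Fin m → ℝ), (∀ j', 0 < x j') → ∀ u' v' : Fin b,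
      Cm x u' v' = Ebil e₁ e₂ x (fun k => V x k v') (fun k => V x k u') := by
    intro x hx u' v'
    rw [hCm x hx u' v']
    exact Cm_rep hbn e₁ e₂ hee x (V x) u' v' (fun a' b' => (hV x hx b').1 a')
      ((hV x hx v').2)
  -- swapping the solution for a different conductance in the second slot
  have hswap : ∀ (x y : Fin m → ℝ), (∀ j', 0 < x j') → (∀ j', 0 < y j') →
      ∀ w w' : Fin b,
      Ebil e₁ e₂ x (fun k => V x k w) (fun k => V y k w') =
        Ebil e₁ e₂ x (fun k => V x k w) (fun k => V x k w') := by
    intro x y hx hy w w'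
    have h0 : Ebil e₁ e₂ x (fun k => V x k w)
        (fun k => V y k w' - V x k w') = 0 :=
      Ebil_harm e₁ e₂ hee x _ _ ((hV x hx w).2)
        (fun k hk => by rw [hbdry y hy w' k hk, hbdry x hx w' k hk, sub_self])
    rw [Ebil_symm, Ebil_sub_left] at h0
    have e1 := Ebil_symm e₁ e₂ x (fun k => V x k w) (fun k => V y k w')
    have e2 := Ebil_symm e₁ e₂ x (fun k => V x k w) (fun k => V x k w')
    linarith
  -- the exact difference identity
  have hdiff : ∀ t : ℝ, 0 < t →
      Cm (Function.update x₀ j t) u v - Cm x₀ u v =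
      (t - x₀ j) *
        (V (Function.update x₀ j t) (e₁ j) v - V (Function.update x₀ j t) (e₂ j) v) *
        (V x₀ (e₁ j) u - V x₀ (e₂ j) u) := by
    intro t ht
    have hpt := hupd_pos t ht
    have c1 : Cm (Function.update x₀ j t) u v =
        Ebil e₁ e₂ (Function.update x₀ j t)
          (fun k => V (Function.update x₀ j t) k v) (fun k => V x₀ k u) := by
      rw [hCE _ hpt u v, ← hswap _ x₀ hpt hx₀ v u]
    have c2 : Cm x₀ u v =
        Ebil e₁ e₂ x₀ (fun k => V (Function.update x₀ j t) k v)
          (fun k => V x₀ k u) := by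
      rw [hCE x₀ hx₀ u v, Ebil_symm, ← hswap x₀ _ hx₀ hpt u v, Ebil_symm]
    rw [c1, c2, Ebil_update]
    ring
  -- continuity (Lipschitz) estimate for the edge voltage drop
  have hcont : ∀ t : ℝ, |t - x₀ j| ≤ x₀ j / 2 →
      |(V (Function.update x₀ j t) (e₁ j) v - V (Function.update x₀ j t) (e₂ j) v) -
        (V x₀ (e₁ j) v - V x₀ (e₂ j) v)| ≤
      (2 * |V x₀ (e₁ j) v - V x₀ (e₂ j) v| / x₀ j) * |t - x₀ j| := by
    intro t ht
    have htpos : 0 < t := by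
      have h := abs_le.1 ht; linarith
    have hpt := hupd_pos t htpos
    set xt := Function.update x₀ j t with hxt
    set w : Fin n → ℝ := fun k => V xt k v - V x₀ k v with hw
    have hwb : ∀ k : Fin n, (k : ℕ) < b → w k = 0 := by
      intro k hk; simp only [hw]; rw [hbdry xt hpt v k hk, sub_self]
    have h1 : Ebil e₁ e₂ x₀ (fun k => V x₀ k v) w = 0 :=
      Ebil_harm e₁ e₂ hee x₀ _ _ ((hV x₀ hx₀ v).2) hwb
    have h2 : Ebil e₁ e₂ xt (fun k => V xt k v) w = 0 :=
      Ebil_harm e₁ e₂ hee xt _ _ ((hV xt hpt v).2) hwb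
    have h4 := Ebil_update e₁ e₂ x₀ j t (fun k => V xt k v) w
    rw [← hxt, h2] at h4
    have h5 : Ebil e₁ e₂ x₀ w w =
        Ebil e₁ e₂ x₀ (fun k => V xt k v) w -
        Ebil e₁ e₂ x₀ (fun k => V x₀ k v) w := by
      rw [hw]
      exact Ebil_sub_left e₁ e₂ x₀ _ _ _
    rw [h1, sub_zero] at h5
    have h6 : x₀ j * (w (e₁ j) - w (e₂ j)) * (w (e₁ j) - w (e₂ j)) ≤
        Ebil e₁ e₂ x₀ w w := by
      apply Finset.single_le_sum
        (f := fun j' => x₀ j' * (w (e₁ j') - w (e₂ j')) * (w (e₁ j') - w (e₂ j')))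
      · intro j' _
        rw [mul_assoc]
        exact mul_nonneg (hx₀ j').le (mul_self_nonneg _)
      · exact Finset.mem_univ j
    set d := w (e₁ j) - w (e₂ j) with hd
    set A := V x₀ (e₁ j) v - V x₀ (e₂ j) v with hA
    have hAd : V xt (e₁ j) v - V xt (e₂ j) v = A + d := by
      simp only [hd, hA, hw]; ring
    have hgoal : (V xt (e₁ j) v - V xt (e₂ j) v) - A = d := by rw [hAd]; ring
    rw [hgoal]
    -- numeric part
    have h7 : x₀ j * d * d ≤ |t - x₀ j| * (|A| + |d|) * |d| := by
      calc x₀ j * d * d ≤ Ebil e₁ e₂ x₀ w w := h6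
        _ = -((t - x₀ j) * (A + d) * d) := by
            rw [h5]; rw [hAd] at h4; linarith
        _ ≤ |(-((t - x₀ j) * (A + d) * d))| := le_abs_self _
        _ = |t - x₀ j| * |A + d| * |d| := by rw [abs_neg, abs_mul, abs_mul]
        _ ≤ |t - x₀ j| * (|A| + |d|) * |d| := by
            gcongr
            exact abs_add_le _ _
    rcases eq_or_ne d 0 with hd0 | hd0
    · rw [hd0, abs_zero]
      positivity
    · have hdpos : 0 < |d| := abs_pos.2 hd0
      have h8 : x₀ j * |d| * |d| ≤ |t - x₀ j| * (|A| + |d|) * |d| := by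
        calc x₀ j * |d| * |d| = x₀ j * d * d := by
              rw [mul_assoc, mul_assoc, abs_mul_abs_self]
          _ ≤ _ := h7
      have h9 : x₀ j * |d| ≤ |t - x₀ j| * (|A| + |d|) :=
        le_of_mul_le_mul_right h8 hdpos
      have h10 : |t - x₀ j| * |d| ≤ (x₀ j / 2) * |d| :=
        mul_le_mul_of_nonneg_right ht (abs_nonneg d)
      rw [div_mul_eq_mul_div, le_div_iff₀ ha]
      nlinarith [abs_nonneg (t - x₀ j), abs_nonneg A, abs_nonneg d]
  constructor
  · -- the derivative
    rw [hasDerivAt_iff_tendsto_slope]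
    set a := x₀ j with haa
    set q : ℝ → ℝ := fun t =>
      (V (Function.update x₀ j t) (e₁ j) v - V (Function.update x₀ j t) (e₂ j) v) *
        (V x₀ (e₁ j) u - V x₀ (e₂ j) u) with hq
    have hL : (V x₀ (e₁ j) u - V x₀ (e₂ j) u) * (V x₀ (e₁ j) v - V x₀ (e₂ j) v) =
        (V x₀ (e₁ j) v - V x₀ (e₂ j) v) * (V x₀ (e₁ j) u - V x₀ (e₂ j) u) := mul_comm _ _
    rw [hL]
    set L := (V x₀ (e₁ j) v - V x₀ (e₂ j) v) * (V x₀ (e₁ j) u - V x₀ (e₂ j) u) with hLdef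
    have hqt : Filter.Tendsto q (nhds a) (nhds L) := by
      rw [tendsto_iff_dist_tendsto_zero]
      set K := (2 * |V x₀ (e₁ j) v - V x₀ (e₂ j) v| / x₀ j) *
        |V x₀ (e₁ j) u - V x₀ (e₂ j) u| with hK
      apply squeeze_zero' (g := fun t => K * |t - a|)
      · exact Filter.Eventually.of_forall fun t => dist_nonneg
      · have hmem : ∀ᶠ t in nhds a, |t - a| ≤ a / 2 := by
          have : Metric.ball a (a / 2) ∈ nhds a := Metric.ball_mem_nhds a (by linarith)
          filter_upwards [this] with t ht
          rw [Metric.mem_ball, Real.dist_eq] at ht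
          exact ht.le
        filter_upwards [hmem] with t ht
        rw [Real.dist_eq, hq, hLdef]
        have : (V (Function.update x₀ j t) (e₁ j) v - V (Function.update x₀ j t) (e₂ j) v) *
              (V x₀ (e₁ j) u - V x₀ (e₂ j) u) -
            (V x₀ (e₁ j) v - V x₀ (e₂ j) v) * (V x₀ (e₁ j) u - V x₀ (e₂ j) u) =
            ((V (Function.update x₀ j t) (e₁ j) v - V (Function.update x₀ j t) (e₂ j) v) -
              (V x₀ (e₁ j) v - V x₀ (e₂ j) v)) * (V x₀ (e₁ j) u - V x₀ (e₂ j) u) := by ring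
        rw [this, abs_mul, hK]
        have hc := hcont t ht
        calc |(V (Function.update x₀ j t) (e₁ j) v - V (Function.update x₀ j t) (e₂ j) v) -
              (V x₀ (e₁ j) v - V x₀ (e₂ j) v)| * |V x₀ (e₁ j) u - V x₀ (e₂ j) u|
            ≤ ((2 * |V x₀ (e₁ j) v - V x₀ (e₂ j) v| / x₀ j) * |t - a|) *
              |V x₀ (e₁ j) u - V x₀ (e₂ j) u| := by
              exact mul_le_mul_of_nonneg_right hc (abs_nonneg _)
          _ = 2 * |V x₀ (e₁ j) v - V x₀ (e₂ j) v| / x₀ j *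
              |V x₀ (e₁ j) u - V x₀ (e₂ j) u| * |t - a| := by ring
      · have habs : Filter.Tendsto (fun t : ℝ => |t - a|) (nhds a) (nhds 0) := by
          have h : Continuous fun t : ℝ => |t - a| := (continuous_sub_right a).abs
          simpa using h.tendsto a
        simpa using habs.const_mul K
    have heq : slope (fun t : ℝ => Cm (Function.update x₀ j t) u v) a =ᶠ[nhdsWithin a {a}ᶜ] q := by
      have hmem : Metric.ball a (a / 2) ∩ {a}ᶜ ∈ nhdsWithin a {a}ᶜ :=
        Filter.inter_mem (mem_nhdsWithin_of_mem_nhds (Metric.ball_mem_nhds a (by linarith)))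
          self_mem_nhdsWithin
      filter_upwards [hmem] with t ⟨htb, htne⟩
      rw [Metric.mem_ball, Real.dist_eq] at htb
      have htpos : 0 < t := by
        have := abs_lt.1 htb; linarith
      have htna : t ≠ a := htne
      have hfa : Cm (Function.update x₀ j a) u v = Cm x₀ u v := by
        rw [haa, Function.update_eq_self]
      rw [slope_def_field]
      rw [div_eq_iff (sub_ne_zero.2 htna)]
      rw [hfa, hdiff t htpos]
      simp only [hq]
      ring
    exact (hqt.mono_left nhdsWithin_le_nhds).congr' heq.symm
  · -- positive semidefiniteness
    intro W
    have hfac : ∑ u' : Fin b, ∑ v' : Fin b,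
        ((V x₀ (e₁ j) u' - V x₀ (e₂ j) u') * (V x₀ (e₁ j) v' - V x₀ (e₂ j) v')) *
          W u' * W v' =
        (∑ u' : Fin b, (V x₀ (e₁ j) u' - V x₀ (e₂ j) u') * W u') ^ 2 := by
      rw [sq, Finset.sum_mul_sum]
      apply Finset.sum_congr rfl; intro u' _
      apply Finset.sum_congr rfl; intro v' _
      ring
    rw [hfac]
    exact sq_nonneg _
end

section
/- The two-variable function C(c₁,c₂) = (c₁+c₂)(c₁²+c₂²)/(c₁²+2c₂²) is a rational function with rational coefficients, is degree-1 homogeneous, and has nonnegative partial derivatives for c₁, c₂ > 0, yet it does not map the product of right half-planes into the right half-plane: there exist z₁, z₂ ∈ ℂ with Re z₁ > 0 and Re z₂ > 0 but Re C(z₁,z₂) ≤ 0. -/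
/-- The function `C(z₁,z₂) = (z₁+z₂)(z₁²+z₂²)/(z₁²+2z₂²)`. -/
noncomputable def akopyan (z₁ z₂ : ℂ) : ℂ :=
  (z₁ + z₂) * (z₁ ^ 2 + z₂ ^ 2) / (z₁ ^ 2 + 2 * z₂ ^ 2)

/-- `C(c₁,c₂) = (c₁+c₂)(c₁²+c₂²)/(c₁²+2c₂²)` is a rational function with rational
coefficients, degree-1 homogeneous, with nonnegative partial derivatives for
`c₁, c₂ > 0`, yet it does not map the product of open right half-planes into the
open right half-plane. -/
theorem stmt_17 :
    (∃ P Q : MvPolynomial (Fin 2) ℚ, ∀ z₁ z₂ : ℂ,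
      akopyan z₁ z₂ =
        MvPolynomial.aeval ![z₁, z₂] P / MvPolynomial.aeval ![z₁, z₂] Q) ∧
    (∀ t z₁ z₂ : ℂ, akopyan (t * z₁) (t * z₂) = t * akopyan z₁ z₂) ∧
    (∀ c₁ c₂ : ℝ, 0 < c₁ → 0 < c₂ →
      0 ≤ deriv (fun x : ℝ => (x + c₂) * (x ^ 2 + c₂ ^ 2) / (x ^ 2 + 2 * c₂ ^ 2)) c₁ ∧
      0 ≤ deriv (fun y : ℝ => (c₁ + y) * (c₁ ^ 2 + y ^ 2) / (c₁ ^ 2 + 2 * y ^ 2)) c₂) ∧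
    (∃ z₁ z₂ : ℂ, 0 < z₁.re ∧ 0 < z₂.re ∧ (akopyan z₁ z₂).re ≤ 0) := by
  refine ⟨?_, ?_, ?_, ?_⟩
  · refine ⟨(MvPolynomial.X 0 + MvPolynomial.X 1) *
      (MvPolynomial.X 0 ^ 2 + MvPolynomial.X 1 ^ 2),
      MvPolynomial.X 0 ^ 2 + 2 * MvPolynomial.X 1 ^ 2, fun z₁ z₂ => ?_⟩
    simp [akopyan]
  · intro t z₁ z₂
    rcases eq_or_ne t 0 with rfl | ht
    · simp [akopyan]
    rcases eq_or_ne (z₁ ^ 2 + 2 * z₂ ^ 2) 0 with hD | hD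
    · have h : (t * z₁) ^ 2 + 2 * (t * z₂) ^ 2 = t ^ 2 * (z₁ ^ 2 + 2 * z₂ ^ 2) := by ring
      simp [akopyan, h, hD]
    · have hD' : (t * z₁) ^ 2 + 2 * (t * z₂) ^ 2 ≠ 0 := by
        have h : (t * z₁) ^ 2 + 2 * (t * z₂) ^ 2 = t ^ 2 * (z₁ ^ 2 + 2 * z₂ ^ 2) := by ring
        rw [h]
        exact mul_ne_zero (pow_ne_zero 2 ht) hD
      unfold akopyan
      field_simp
  · intro c₁ c₂ hc₁ hc₂
    constructor
    · have hD : (c₁ ^ 2 + 2 * c₂ ^ 2) ≠ 0 := by positivity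
      have h1 : HasDerivAt (fun x : ℝ => x + c₂) 1 c₁ := (hasDerivAt_id c₁).add_const c₂
      have h2 : HasDerivAt (fun x : ℝ => x ^ 2 + c₂ ^ 2) (2 * c₁) c₁ := by
        simpa using (hasDerivAt_pow 2 c₁).add_const (c₂ ^ 2)
      have h3 : HasDerivAt (fun x : ℝ => x ^ 2 + 2 * c₂ ^ 2) (2 * c₁) c₁ := by
        simpa using (hasDerivAt_pow 2 c₁).add_const (2 * c₂ ^ 2)
      have hN : HasDerivAt (fun x : ℝ => (x + c₂) * (x ^ 2 + c₂ ^ 2)) _ c₁ := h1.mul h2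
      have h := hN.div h3 hD
      rw [show deriv (fun x : ℝ => (x + c₂) * (x ^ 2 + c₂ ^ 2) / (x ^ 2 + 2 * c₂ ^ 2)) c₁ = _ from h.deriv]
      apply div_nonneg
      · nlinarith [sq_nonneg c₁, sq_nonneg c₂, sq_nonneg (c₁ * c₂), pow_pos hc₁ 4,
          pow_pos hc₂ 4, mul_pos hc₁ hc₂]
      · positivity
    · have hD : (c₁ ^ 2 + 2 * c₂ ^ 2) ≠ 0 := by positivity
      have h1 : HasDerivAt (fun y : ℝ => c₁ + y) 1 c₂ := by
        simpa using (hasDerivAt_id c₂).const_add c₁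
      have h2 : HasDerivAt (fun y : ℝ => c₁ ^ 2 + y ^ 2) (2 * c₂) c₂ := by
        simpa using (hasDerivAt_pow 2 c₂).const_add (c₁ ^ 2)
      have h3 : HasDerivAt (fun y : ℝ => c₁ ^ 2 + 2 * y ^ 2) (2 * (2 * c₂)) c₂ := by
        simpa using ((hasDerivAt_pow 2 c₂).const_mul 2).const_add (c₁ ^ 2)
      have hN : HasDerivAt (fun y : ℝ => (c₁ + y) * (c₁ ^ 2 + y ^ 2)) _ c₂ := h1.mul h2
      have h := hN.div h3 hD
      rw [show deriv (fun y : ℝ => (c₁ + y) * (c₁ ^ 2 + y ^ 2) / (c₁ ^ 2 + 2 * y ^ 2)) c₂ = _ from h.deriv]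
      apply div_nonneg
      · nlinarith [sq_nonneg (c₂ - c₁), pow_pos hc₂ 4, sq_nonneg (c₁ * (c₂ - c₁))]
      · positivity
  · refine ⟨1 + Complex.I, 1 - Complex.I, by simp, by simp, ?_⟩
    have h : (1 + Complex.I) ^ 2 + (1 - Complex.I) ^ 2 = 0 := by
      ring_nf
      simp [Complex.I_sq]
    simp [akopyan, h]
end

section
/- Characterization of 2×2 alternating-current responses: a complex 2×2 matrix C is the response of a connected network with two boundary vertices and edge conductances of positive real part if and only if C is symmetric, each row sums to zero, Re C is positive semidefinite, and the quadratic form ∑ Re(C_{uv}) U_u U_v (U real) vanishes only when U₁ = U₂. -/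
open Finset Complex


/-- `IsResponse n b hbn c Cm` means: for every discrete harmonic voltage vector `U`
on the network with conductance matrix `c`, the matrix `Cm` maps the boundary
voltages to the incoming boundary currents. -/
def IsResponse (n b : ℕ) (hbn : b ≤ n) (c : Fin n → Fin n → ℂ)
    (Cm : Fin b → Fin b → ℂ) : Prop :=
  ∀ U : Fin n → ℂ,
    (∀ k : Fin n, b ≤ (k : ℕ) → ∑ l, c k l * (U k - U l) = 0) →
    ∀ u : Fin b, ∑ v : Fin b, Cm u v * U (Fin.castLE hbn v) =
      ∑ k, c (Fin.castLE hbn u) k * (U (Fin.castLE hbn u) - U k)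

section Aux

variable {n : ℕ}

lemma conj_mul_self (z : ℂ) : (starRingEnd ℂ) z * z = (Complex.normSq z : ℂ) := by
  rw [mul_comm]; exact Complex.mul_conj z

lemma energy_aux (c : Fin n → Fin n → ℂ) (hsym : ∀ k l, c k l = c l k)
    (U : Fin n → ℂ) :
    2 * ∑ k, (starRingEnd ℂ) (U k) * ∑ l, c k l * (U k - U l)
      = ∑ k, ∑ l, c k l * (Complex.normSq (U k - U l) : ℂ) := by
  have h1 : ∑ k, (starRingEnd ℂ) (U k) * ∑ l, c k l * (U k - U l)
      = ∑ k, ∑ l, c k l * ((starRingEnd ℂ) (U k) * (U k - U l)) := by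
    refine Finset.sum_congr rfl fun k _ => ?_
    rw [Finset.mul_sum]
    exact Finset.sum_congr rfl fun l _ => by ring
  have h2 : ∑ k, ∑ l, c k l * ((starRingEnd ℂ) (U k) * (U k - U l))
      = ∑ k, ∑ l, c k l * ((starRingEnd ℂ) (U l) * (U l - U k)) := by
    rw [Finset.sum_comm]
    exact Finset.sum_congr rfl fun k _ => Finset.sum_congr rfl fun l _ => by rw [hsym k l]
  rw [two_mul, h1]
  nth_rewrite 2 [h2]
  rw [← Finset.sum_add_distrib]
  refine Finset.sum_congr rfl fun k _ => ?_
  rw [← Finset.sum_add_distrib]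
  refine Finset.sum_congr rfl fun l _ => ?_
  rw [← conj_mul_self, map_sub]
  ring

lemma const_of_energy (c : Fin n → Fin n → ℂ) (hsym : ∀ k l, c k l = c l k)
    (hpos : ∀ k l, c k l = 0 ∨ 0 < (c k l).re)
    (hconn : ∀ k l : Fin n, Relation.ReflTransGen (fun i j : Fin n => c i j ≠ 0) k l)
    (U : Fin n → ℂ)
    (hS : (∑ k, (starRingEnd ℂ) (U k) * ∑ l, c k l * (U k - U l)).re ≤ 0) :
    ∀ k l, U k = U l := by
  have he := congrArg Complex.re (energy_aux c hsym U)
  have hre : ∑ k, ∑ l, (c k l).re * Complex.normSq (U k - U l) ≤ 0 := by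
    have hL : (2 * ∑ k, (starRingEnd ℂ) (U k) * ∑ l, c k l * (U k - U l)).re
        = 2 * (∑ k, (starRingEnd ℂ) (U k) * ∑ l, c k l * (U k - U l)).re := by
      simp [Complex.mul_re]
    have hR : (∑ k, ∑ l, c k l * (Complex.normSq (U k - U l) : ℂ)).re
        = ∑ k, ∑ l, (c k l).re * Complex.normSq (U k - U l) := by
      rw [Complex.re_sum]
      refine Finset.sum_congr rfl fun k _ => ?_
      rw [Complex.re_sum]
      refine Finset.sum_congr rfl fun l _ => ?_
      simp [Complex.mul_re]
    rw [hL, hR] at he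
    rw [← he]
    linarith
  have hnn : ∀ k ∈ Finset.univ, (0:ℝ) ≤ ∑ l, (c k l).re * Complex.normSq (U k - U l) := by
    intro k _
    refine Finset.sum_nonneg fun l _ => ?_
    rcases hpos k l with h | h
    · simp [h]
    · exact mul_nonneg h.le (Complex.normSq_nonneg _)
  have hz : ∑ k, ∑ l, (c k l).re * Complex.normSq (U k - U l) = 0 :=
    le_antisymm hre (Finset.sum_nonneg hnn)
  have hterm : ∀ k l : Fin n, (c k l).re * Complex.normSq (U k - U l) = 0 := by
    intro k l
    have h1 := (Finset.sum_eq_zero_iff_of_nonneg hnn).mp hz k (Finset.mem_univ k)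
    have h2 : ∀ l ∈ Finset.univ, (0:ℝ) ≤ (c k l).re * Complex.normSq (U k - U l) := by
      intro l _
      rcases hpos k l with h | h
      · simp [h]
      · exact mul_nonneg h.le (Complex.normSq_nonneg _)
    exact (Finset.sum_eq_zero_iff_of_nonneg h2).mp h1 l (Finset.mem_univ l)
  have hedge : ∀ k l : Fin n, c k l ≠ 0 → U k = U l := by
    intro k l hkl
    rcases hpos k l with h | h
    · exact absurd h hkl
    · have := hterm k l
      have h2 : Complex.normSq (U k - U l) = 0 := by
        rcases mul_eq_zero.mp this with h' | h'
        · exact absurd h' (ne_of_gt h)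
        · exact h'
      have := Complex.normSq_eq_zero.mp h2
      exact sub_eq_zero.mp this
  intro k l
  have h := hconn k l
  induction h with
  | refl => rfl
  | tail _ hstep ih => exact ih.trans (hedge _ _ hstep)

lemma sum_boundary (hbn : 2 ≤ n) (f : Fin n → ℂ)
    (hf : ∀ k : Fin n, 2 ≤ (k : ℕ) → f k = 0) :
    ∑ k, f k = f (Fin.castLE hbn 0) + f (Fin.castLE hbn 1) := by
  have hab : (Fin.castLE hbn 0 : Fin n) ≠ Fin.castLE hbn 1 := by
    intro h
    have := congrArg Fin.val h
    simp at this
  rw [← Finset.sum_pair hab]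
  symm
  apply Finset.sum_subset (Finset.subset_univ _)
  intro x _ hx
  simp only [Finset.mem_insert, Finset.mem_singleton, not_or] at hx
  apply hf
  by_contra hlt
  push_neg at hlt
  have h01 : (x : ℕ) = 0 ∨ (x : ℕ) = 1 := by omega
  rcases h01 with h | h
  · exact hx.1 (Fin.ext (by simpa using h))
  · exact hx.2 (Fin.ext (by simpa using h))

noncomputable def Tmap (c : Fin n → Fin n → ℂ) : (Fin n → ℂ) →ₗ[ℂ] (Fin n → ℂ) where
  toFun U := fun k => if (k : ℕ) < 2 then U k else ∑ l, c k l * (U k - U l)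
  map_add' U V := by
    funext k
    by_cases h : (k : ℕ) < 2
    · simp only [h, if_true, ↓reduceIte, Pi.add_apply]
    · simp only [h, if_false, Pi.add_apply]
      rw [← Finset.sum_add_distrib]
      exact Finset.sum_congr rfl fun l _ => by ring
  map_smul' a U := by
    funext k
    by_cases h : (k : ℕ) < 2
    · simp only [h, if_true, ↓reduceIte, Pi.smul_apply, smul_eq_mul, RingHom.id_apply]
    · simp only [h, if_false, Pi.smul_apply, smul_eq_mul, RingHom.id_apply]
      rw [Finset.mul_sum]
      exact Finset.sum_congr rfl fun l _ => by ring

lemma Tmap_injective (hbn : 2 ≤ n) (c : Fin n → Fin n → ℂ) (hsym : ∀ k l, c k l = c l k)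
    (hpos : ∀ k l, c k l = 0 ∨ 0 < (c k l).re)
    (hconn : ∀ k l : Fin n, Relation.ReflTransGen (fun i j : Fin n => c i j ≠ 0) k l) :
    Function.Injective (Tmap c) := by
  rw [injective_iff_map_eq_zero]
  intro U hU
  have hU' : ∀ k : Fin n, (if (k : ℕ) < 2 then U k else ∑ l, c k l * (U k - U l)) = 0 :=
    fun k => congrFun hU k
  have hbd : ∀ k : Fin n, (k : ℕ) < 2 → U k = 0 := by
    intro k hk; have := hU' k; rwa [if_pos hk] at this
  have hint : ∀ k : Fin n, ¬ (k : ℕ) < 2 → ∑ l, c k l * (U k - U l) = 0 := by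
    intro k hk; have := hU' k; rwa [if_neg hk] at this
  have hS : ∑ k, (starRingEnd ℂ) (U k) * ∑ l, c k l * (U k - U l) = 0 := by
    apply Finset.sum_eq_zero
    intro k _
    by_cases h : (k : ℕ) < 2
    · rw [hbd k h]; simp
    · rw [hint k h, mul_zero]
  have hconst := const_of_energy c hsym hpos hconn U (by rw [hS]; simp)
  have h0n : 0 < n := lt_of_lt_of_le (by norm_num) hbn
  funext k
  exact (hconst k ⟨0, h0n⟩).trans (hbd ⟨0, h0n⟩ (by simp))

lemma forward (Cm : Fin 2 → Fin 2 → ℂ) (hbn : 2 ≤ n) (c : Fin n → Fin n → ℂ)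
    (hsym : ∀ k l, c k l = c l k)
    (hpos : ∀ k l, c k l = 0 ∨ 0 < (c k l).re)
    (hconn : ∀ k l : Fin n, Relation.ReflTransGen (fun i j : Fin n => c i j ≠ 0) k l)
    (hresp : IsResponse n 2 hbn c Cm) :
    ∃ γ : ℂ, 0 < γ.re ∧ Cm 0 0 = γ ∧ Cm 0 1 = -γ ∧ Cm 1 0 = -γ ∧ Cm 1 1 = γ := by
  set a : Fin n := Fin.castLE hbn 0 with ha
  set b : Fin n := Fin.castLE hbn 1 with hb
  have hav : (a : ℕ) = 0 := rfl
  have hbv : (b : ℕ) = 1 := rfl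
  obtain ⟨U, hUe⟩ := LinearMap.surjective_of_injective
    (Tmap_injective hbn c hsym hpos hconn) (fun k => if k = a then 1 else 0)
  have hUe' : ∀ k : Fin n, (if (k : ℕ) < 2 then U k else ∑ l, c k l * (U k - U l))
      = (if k = a then 1 else 0) := fun k => congrFun hUe k
  have hUa : U a = 1 := by
    have := hUe' a
    rwa [if_pos (by rw [hav]; norm_num), if_pos rfl] at this
  have hUb : U b = 0 := by
    have := hUe' b
    have hba : b ≠ a := by
      intro h; have := congrArg Fin.val h; rw [hav, hbv] at this; exact one_ne_zero this
    rwa [if_pos (by rw [hbv]; norm_num), if_neg hba] at this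
  have hharm : ∀ k : Fin n, 2 ≤ (k : ℕ) → ∑ l, c k l * (U k - U l) = 0 := by
    intro k hk
    have := hUe' k
    have hka : k ≠ a := by
      intro h; rw [h, hav] at hk; omega
    rwa [if_neg (by omega), if_neg hka] at this
  have hR := hresp U hharm
  set f : Fin n → ℂ := fun k => ∑ l, c k l * (U k - U l) with hf
  have hfk : ∀ k, f k = ∑ l, c k l * (U k - U l) := fun _ => rfl
  have hR0 : Cm 0 0 = f a := by
    have h := hR 0
    rw [Fin.sum_univ_two] at h
    rw [← ha, ← hb, hUa, hUb, mul_one, mul_zero, add_zero] at h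
    have hfa : f a = ∑ k, c a k * (1 - U k) := by
      rw [hfk a]
      exact Finset.sum_congr rfl fun l _ => by rw [hUa]
    rw [hfa]
    exact h
  have hR1 : Cm 1 0 = f b := by
    have h := hR 1
    rw [Fin.sum_univ_two] at h
    rw [← ha, ← hb, hUa, hUb, mul_one, mul_zero, add_zero] at h
    have hfb : f b = ∑ k, c b k * (0 - U k) := by
      rw [hfk b]
      exact Finset.sum_congr rfl fun l _ => by rw [hUb]
    rw [hfb]
    exact h
  -- row sums zero, from the constant voltage
  have hrow : ∀ u : Fin 2, Cm u 0 + Cm u 1 = 0 := by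
    intro u
    have h1 := hresp (fun _ => 1) (fun k _ => by simp) u
    rw [Fin.sum_univ_two] at h1
    simpa using h1
  -- total current is zero
  have htot : f a + f b = 0 := by
    have h1 : ∑ k, f k = ∑ k, ∑ l, c k l * (U l - U k) := by
      rw [hf]
      rw [Finset.sum_comm]
      exact Finset.sum_congr rfl fun k _ => Finset.sum_congr rfl fun l _ => by rw [hsym k l]
    have h2 : ∑ k, f k + ∑ k, ∑ l, c k l * (U l - U k) = 0 := by
      rw [hf, ← Finset.sum_add_distrib]
      apply Finset.sum_eq_zero
      intro k _
      rw [← Finset.sum_add_distrib]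
      apply Finset.sum_eq_zero
      intro l _
      ring
    rw [← h1] at h2
    have h3 : ∑ k, f k = 0 := by
      have := add_self_eq_zero.mp h2
      exact this
    rw [sum_boundary hbn f hharm] at h3
    exact h3
  -- the current at a equals the energy
  have hSI : ∑ k, (starRingEnd ℂ) (U k) * f k = f a := by
    rw [sum_boundary hbn (fun k => (starRingEnd ℂ) (U k) * f k)
      (fun k hk => by
        show (starRingEnd ℂ) (U k) * f k = 0
        rw [hfk k, hharm k hk, mul_zero])]
    rw [← ha, ← hb, hUa, hUb]
    simp
  have hSI' : ∑ k, (starRingEnd ℂ) (U k) * ∑ l, c k l * (U k - U l) = f a := hSI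
  have hrea : 0 < (f a).re := by
    rcases lt_or_ge 0 (f a).re with h | h
    · exact h
    · exfalso
      have hconst := const_of_energy c hsym hpos hconn U (by rw [hSI']; exact h)
      have h1 : (1 : ℂ) = 0 := by rw [← hUa, ← hUb]; exact hconst a b
      exact one_ne_zero h1
  refine ⟨f a, hrea, hR0, ?_, ?_, ?_⟩
  · have h := hrow 0
    rw [hR0] at h
    linear_combination h
  · linear_combination hR1 + htot
  · linear_combination (hrow 1) - hR1 - htot

end Aux


/-- Characterization of 2×2 alternating-current responses: a complex 2×2 matrix `Cm`
is the response of a connected network with two boundary vertices and edge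
conductances of positive real part if and only if `Cm` is symmetric, its rows sum
to zero, `Re Cm` is positive semidefinite, and the real quadratic form
`∑ Re(C_{uv}) W_u W_v` vanishes only when `W₁ = W₂`. -/
theorem stmt_19 (Cm : Fin 2 → Fin 2 → ℂ) :
    (∃ (n : ℕ) (hbn : 2 ≤ n) (c : Fin n → Fin n → ℂ),
      (∀ k l : Fin n, c k l = c l k) ∧
      (∀ k : Fin n, c k k = 0) ∧
      (∀ k l : Fin n, c k l = 0 ∨ 0 < (c k l).re) ∧
      (∀ k l : Fin n, Relation.ReflTransGen (fun i j : Fin n => c i j ≠ 0) k l) ∧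
      IsResponse n 2 hbn c Cm) ↔
    ((∀ u v : Fin 2, Cm u v = Cm v u) ∧
      (∀ u : Fin 2, ∑ v : Fin 2, Cm u v = 0) ∧
      (∀ W : Fin 2 → ℝ, 0 ≤ ∑ u : Fin 2, ∑ v : Fin 2, (Cm u v).re * W u * W v) ∧
      (∀ W : Fin 2 → ℝ,
        (∑ u : Fin 2, ∑ v : Fin 2, (Cm u v).re * W u * W v) = 0 → W 0 = W 1)) := by
  constructor
  · rintro ⟨n, hbn, c, hsym, hdiag, hpos, hconn, hresp⟩
    obtain ⟨γ, hγ, h00, h01, h10, h11⟩ := forward Cm hbn c hsym hpos hconn hresp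
    have e00 : (Cm 0 0).re = γ.re := by rw [h00]
    have e01 : (Cm 0 1).re = -γ.re := by rw [h01]; simp
    have e10 : (Cm 1 0).re = -γ.re := by rw [h10]; simp
    have e11 : (Cm 1 1).re = γ.re := by rw [h11]
    have hquad : ∀ W : Fin 2 → ℝ,
        ∑ u : Fin 2, ∑ v : Fin 2, (Cm u v).re * W u * W v = γ.re * (W 0 - W 1) ^ 2 := by
      intro W
      rw [Fin.sum_univ_two, Fin.sum_univ_two, Fin.sum_univ_two, e00, e01, e10, e11]
      ring
    refine ⟨?_, ?_, ?_, ?_⟩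
    · intro u v
      fin_cases u <;> fin_cases v <;> simp [h00, h01, h10, h11]
    · intro u
      fin_cases u <;> rw [Fin.sum_univ_two] <;> simp [h00, h01, h10, h11]
    · intro W
      rw [hquad W]
      exact mul_nonneg hγ.le (sq_nonneg _)
    · intro W hW
      rw [hquad W] at hW
      have h2 : (W 0 - W 1) ^ 2 = 0 := by
        rcases mul_eq_zero.mp hW with h | h
        · exact absurd h (ne_of_gt hγ)
        · exact h
      have := pow_eq_zero_iff (n := 2) (by norm_num) |>.mp h2
      linarith [sub_eq_zero.mp this]
  · rintro ⟨hsymm, hrow, hposd, hnd⟩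
    set γ : ℂ := Cm 0 0 with hγdef
    have h01 : Cm 0 1 = -γ := by
      have h := hrow 0
      rw [Fin.sum_univ_two] at h
      linear_combination h
    have h10 : Cm 1 0 = -γ := by rw [hsymm 1 0]; exact h01
    have h11 : Cm 1 1 = γ := by
      have h := hrow 1
      rw [Fin.sum_univ_two] at h
      linear_combination h - h10
    have hγre : 0 < γ.re := by
      set W : Fin 2 → ℝ := fun i => if i = 0 then 1 else 0 with hW
      have hq : ∑ u : Fin 2, ∑ v : Fin 2, (Cm u v).re * W u * W v = γ.re := by
        rw [Fin.sum_univ_two, Fin.sum_univ_two, Fin.sum_univ_two]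
        simp [hW, hγdef]
      have h0 : 0 ≤ γ.re := by rw [← hq]; exact hposd W
      rcases h0.lt_or_eq with h | h
      · exact h
      · exfalso
        have := hnd W (by rw [hq, ← h])
        simp [hW] at this
    refine ⟨2, le_refl 2, fun k l => if k = l then 0 else γ, ?_, ?_, ?_, ?_, ?_⟩
    · intro k l
      by_cases h : k = l
      · subst h; rfl
      · show (if k = l then (0:ℂ) else γ) = (if l = k then (0:ℂ) else γ)
        rw [if_neg h, if_neg (Ne.symm h)]
    · intro k; simp
    · intro k l
      by_cases h : k = l
      · left; simp [h]
      · right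
        show 0 < (if k = l then (0:ℂ) else γ).re
        rw [if_neg h]; exact hγre
    · intro k l
      by_cases h : k = l
      · subst h; exact Relation.ReflTransGen.refl
      · refine Relation.ReflTransGen.single ?_
        show ¬ (if k = l then 0 else γ) = 0
        rw [if_neg h]
        intro hz
        rw [hz] at hγre
        simp at hγre
    · intro U _ u
      have hc : ∀ v : Fin 2, Fin.castLE (le_refl 2) v = v := fun v => rfl
      rw [Fin.sum_univ_two, Fin.sum_univ_two, hc, hc, hc]
      fin_cases u
      · show Cm 0 0 * U 0 + Cm 0 1 * U 1 =
          (if (0 : Fin 2) = 0 then (0:ℂ) else γ) * (U 0 - U 0) +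
          (if (0 : Fin 2) = 1 then (0:ℂ) else γ) * (U 0 - U 1)
        rw [if_pos rfl, if_neg (by decide), ← hγdef, h01]
        ring
      · show Cm 1 0 * U 0 + Cm 1 1 * U 1 =
          (if (1 : Fin 2) = 0 then (0:ℂ) else γ) * (U 1 - U 0) +
          (if (1 : Fin 2) = 1 then (0:ℂ) else γ) * (U 1 - U 1)
        rw [if_neg (by decide), if_pos rfl, h10, h11]
        ring
end
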